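/- arXiv:1307.0169 — 7 statements merged into one kernel-verified Lean document; each statement's English description precedes it below -/
import Mathlib

section
/- For every integer n ≥ 0, the number of partitions p(n) satisfies the Durfee square identity: the generating function ∑ p(n) qⁿ equals 1 + ∑_{n≥1} q^{n²}/((1-q)²(1-q²)²⋯(1-qⁿ)²) as formal power series. -/
namespace DurfeeAux
open Multiset Finset

/-- number of elements of `s` that are `≥ j` -/
def cnt (s : Multiset ℕ) (j : ℕ) : ℕ := Multiset.card (s.filter (fun t => j ≤ t))

/-- conjugate multiset -/
def conjM (s : Multiset ℕ) : Multiset ℕ :=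
  (((Finset.range s.sum).val.map fun i => cnt s (i + 1)).filter (fun v => 0 < v))

lemma cnt_le_card (s : Multiset ℕ) (j : ℕ) : cnt s j ≤ Multiset.card s :=
  Multiset.card_le_card (Multiset.filter_le _ _)

lemma cnt_anti (s : Multiset ℕ) {j k : ℕ} (h : j ≤ k) : cnt s k ≤ cnt s j :=
  Multiset.card_le_card (Multiset.monotone_filter_right s (fun t hk => le_trans h hk))

lemma cnt_cons (a : ℕ) (s : Multiset ℕ) (j : ℕ) :
    cnt (a ::ₘ s) j = (if j ≤ a then 1 else 0) + cnt s j := by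
  simp only [cnt, Multiset.filter_cons]
  split_ifs <;> simp <;> omega

lemma cnt_split (s : Multiset ℕ) (v : ℕ) :
    cnt s v = Multiset.count v s + cnt s (v + 1) := by
  induction s using Multiset.induction_on with
  | empty => simp [cnt]
  | cons a s ih =>
    rw [cnt_cons, cnt_cons, Multiset.count_cons, ih]
    split_ifs <;> omega

lemma cnt_pos_iff (s : Multiset ℕ) (j : ℕ) : 0 < cnt s j ↔ ∃ e ∈ s, j ≤ e := by
  simp only [cnt, Multiset.card_pos_iff_exists_mem, Multiset.mem_filter]

lemma le_sum_of_mem {s : Multiset ℕ} {e : ℕ} (h : e ∈ s) : e ≤ s.sum :=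
  Multiset.single_le_sum (fun _ _ => Nat.zero_le _) _ h

lemma cnt_eq_zero (s : Multiset ℕ) {j : ℕ} (h : s.sum < j) : cnt s j = 0 := by
  rw [cnt, Multiset.card_eq_zero, Multiset.filter_eq_nil]
  intro e he hje
  exact absurd (le_sum_of_mem he) (by omega)

lemma sum_filter_pos (s : Multiset ℕ) : (s.filter (fun v => 0 < v)).sum = s.sum := by
  conv_rhs => rw [← Multiset.filter_add_not (fun v => 0 < v) s]
  rw [Multiset.sum_add, Multiset.sum_eq_zero (s := s.filter (fun v => ¬ 0 < v)) (by
    intro x hx; have := Multiset.of_mem_filter hx; omega)]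
  omega

lemma cnt_sum_le (s : Multiset ℕ) {j : ℕ} (hj : 1 ≤ j) : cnt s j ≤ s.sum := by
  have h1 : cnt s j ≤ (s.filter (fun t => j ≤ t)).sum := by
    simpa [cnt] using Multiset.card_nsmul_le_sum (s := s.filter (fun t => j ≤ t))
      (fun x hx => le_trans hj (Multiset.of_mem_filter hx))
  have h2 : (s.filter (fun t => j ≤ t)).sum ≤ s.sum := by
    conv_rhs => rw [← Multiset.filter_add_not (fun t => j ≤ t) s]
    rw [Multiset.sum_add]; omega
  omega

lemma range_filter_card {m B : ℕ} (h : m ≤ B) :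
    ((Finset.range B).filter (fun i => i < m)).card = m := by
  have : (Finset.range B).filter (fun i => i < m) = Finset.range m := by
    ext i; simp only [Finset.mem_filter, Finset.mem_range]; omega
  rw [this, Finset.card_range]

lemma sum_range_cnt (s : Multiset ℕ) :
    ∀ B : ℕ, (∀ e ∈ s, e ≤ B) → ∑ i ∈ Finset.range B, cnt s (i + 1) = s.sum := by
  induction s using Multiset.induction_on with
  | empty => simp [cnt]
  | cons a s ih =>
    intro B hB
    simp only [cnt_cons]
    rw [Finset.sum_add_distrib, ih B (fun e he => hB e (Multiset.mem_cons_of_mem he))]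
    have : ∑ i ∈ Finset.range B, (if i + 1 ≤ a then 1 else 0) = a := by
      rw [← Finset.card_filter]
      have : ((Finset.range B).filter (fun i => i + 1 ≤ a)) =
          ((Finset.range B).filter (fun i => i < a)) := by
        apply Finset.filter_congr; intro i _; constructor <;> (intro; omega)
      rw [this, range_filter_card (hB a (Multiset.mem_cons_self a s))]
    rw [this, Multiset.sum_cons]

lemma sum_conjM (s : Multiset ℕ) : (conjM s).sum = s.sum := by
  rw [conjM, sum_filter_pos]
  have : ((Finset.range s.sum).val.map fun i => cnt s (i + 1)).sum
      = ∑ i ∈ Finset.range s.sum, cnt s (i + 1) := rfl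
  rw [this, sum_range_cnt s s.sum (fun e he => le_sum_of_mem he)]

lemma mem_conjM_pos {s : Multiset ℕ} {v : ℕ} (h : v ∈ conjM s) : 0 < v :=
  (Multiset.mem_filter.mp h).2

lemma mem_conjM_le_card {s : Multiset ℕ} {v : ℕ} (h : v ∈ conjM s) :
    v ≤ Multiset.card s := by
  obtain ⟨hm, -⟩ := Multiset.mem_filter.mp h
  obtain ⟨i, -, rfl⟩ := Multiset.mem_map.mp hm
  exact cnt_le_card _ _

lemma card_conjM_le {s : Multiset ℕ} {n : ℕ} (h : ∀ e ∈ s, e ≤ n) :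
    Multiset.card (conjM s) ≤ n := by
  rw [conjM, ← Multiset.countP_eq_card_filter, Multiset.countP_map, ← Finset.filter_val]
  have hcard : Multiset.card ((Finset.range s.sum).filter
      (fun a => 0 < cnt s (a + 1))).val = ((Finset.range s.sum).filter
      (fun a => 0 < cnt s (a + 1))).card := rfl
  rw [hcard]
  refine le_trans (Finset.card_le_card (fun i hi => ?_)) (Finset.card_range n).le
  simp only [Finset.mem_filter, Finset.mem_range, Function.comp] at hi ⊢
  obtain ⟨e, he, hie⟩ := (cnt_pos_iff s (i + 1)).mp hi.2
  have := h e he; omega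


/-- `G s v` = number of `j ≥ 1` with `cnt s j ≥ v` -/
def G (s : Multiset ℕ) (v : ℕ) : ℕ :=
  ((Finset.range s.sum).filter (fun i => v ≤ cnt s (i + 1))).card

lemma cnt_conjM (s : Multiset ℕ) {v : ℕ} (hv : 1 ≤ v) :
    cnt (conjM s) v = G s v := by
  rw [cnt, conjM, Multiset.filter_filter, ← Multiset.countP_eq_card_filter,
    Multiset.countP_map, ← Finset.filter_val, G]
  have : ((Finset.range s.sum).filter (fun a => v ≤ cnt s (a + 1) ∧ 0 < cnt s (a + 1)))
      = ((Finset.range s.sum).filter (fun i => v ≤ cnt s (i + 1))) := by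
    apply Finset.filter_congr; intro i _; constructor
    · rintro ⟨h1, -⟩; exact h1
    · intro h1; exact ⟨h1, by omega⟩
  rw [this]
  rfl

lemma galois (s : Multiset ℕ) {u v : ℕ} (hu : 1 ≤ u) (hv : 1 ≤ v) :
    u ≤ G s v ↔ v ≤ cnt s u := by
  constructor
  · intro h
    by_contra hc
    push_neg at hc
    have hsub : ((Finset.range s.sum).filter (fun i => v ≤ cnt s (i + 1)))
        ⊆ Finset.range (u - 1) := by
      intro i hi
      obtain ⟨-, hi2⟩ := Finset.mem_filter.mp hi
      rw [Finset.mem_range]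
      by_contra hiu
      have : u ≤ i + 1 := by omega
      have := cnt_anti s this
      omega
    have := Finset.card_le_card hsub
    rw [Finset.card_range] at this
    rw [G] at h
    omega
  · intro h
    have hub : u ≤ s.sum := by
      by_contra hc
      push_neg at hc
      have := cnt_eq_zero s hc
      omega
    have hsub : Finset.range u ⊆
        ((Finset.range s.sum).filter (fun i => v ≤ cnt s (i + 1))) := by
      intro i hi
      rw [Finset.mem_range] at hi
      refine Finset.mem_filter.mpr ⟨Finset.mem_range.mpr (by omega), ?_⟩
      exact le_trans h (cnt_anti s (by omega))
    have := Finset.card_le_card hsub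
    rwa [Finset.card_range] at this

lemma G_conjM (s : Multiset ℕ) {v : ℕ} (hv : 1 ≤ v) :
    G (conjM s) v = cnt s v := by
  rw [G]
  have h1 : ((Finset.range (conjM s).sum).filter (fun i => v ≤ cnt (conjM s) (i + 1)))
      = ((Finset.range (conjM s).sum).filter (fun i => i < cnt s v)) := by
    apply Finset.filter_congr; intro i _
    rw [cnt_conjM s (by omega)]
    constructor
    · intro h; have := (galois s (u := v) (v := i + 1) hv (by omega)).mp h; omega
    · intro h; exact (galois s (u := v) (v := i + 1) hv (by omega)).mpr (by omega)
  rw [h1, range_filter_card]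
  rw [sum_conjM]
  exact cnt_sum_le s hv

lemma conjM_conjM {s : Multiset ℕ} (h : ∀ e ∈ s, 0 < e) : conjM (conjM s) = s := by
  ext v
  rcases Nat.eq_zero_or_pos v with rfl | hv
  · rw [Multiset.count_eq_zero_of_notMem, Multiset.count_eq_zero_of_notMem]
    · intro hm; exact absurd (h 0 hm) (by omega)
    · intro hm; exact absurd (mem_conjM_pos hm) (by omega)
  · have e1 : cnt (conjM (conjM s)) v = cnt s v := by
      rw [cnt_conjM (conjM s) hv, G_conjM s hv]
    have e2 : cnt (conjM (conjM s)) (v + 1) = cnt s (v + 1) := by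
      rw [cnt_conjM (conjM s) (by omega), G_conjM s (by omega)]
    have := cnt_split (conjM (conjM s)) v
    have := cnt_split s v
    omega


lemma sum_map_sub {n : ℕ} : ∀ (s : Multiset ℕ), (∀ e ∈ s, n ≤ e) →
    (s.map (fun e => e - n)).sum + n * Multiset.card s = s.sum := by
  intro s
  induction s using Multiset.induction_on with
  | empty => simp
  | cons a s ih =>
    intro h
    simp only [Multiset.map_cons, Multiset.sum_cons, Multiset.card_cons]
    rw [Nat.mul_add, mul_one]
    have h1 := ih (fun e he => h e (Multiset.mem_cons_of_mem he))
    have h2 := h a (Multiset.mem_cons_self a s)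
    omega

lemma sum_map_add_const {n : ℕ} : ∀ (s : Multiset ℕ),
    (s.map (fun e => e + n)).sum = s.sum + n * Multiset.card s := by
  intro s
  induction s using Multiset.induction_on with
  | empty => simp
  | cons a s ih =>
    simp only [Multiset.map_cons, Multiset.sum_cons, Multiset.card_cons]
    rw [ih, Nat.mul_add, mul_one]
    omega

lemma cnt_add (s t : Multiset ℕ) (j : ℕ) : cnt (s + t) j = cnt s j + cnt t j := by
  simp [cnt, Multiset.filter_add]

lemma cnt_replicate (k n j : ℕ) : cnt (Multiset.replicate k n) j = if j ≤ n then k else 0 := by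
  rw [cnt]
  split_ifs with h
  · rw [Multiset.filter_eq_self.mpr (fun a ha => by
      rw [Multiset.eq_of_mem_replicate ha]; exact h), Multiset.card_replicate]
  · rw [Multiset.filter_eq_nil.mpr (fun a ha => by
      rw [Multiset.eq_of_mem_replicate ha]; exact h), Multiset.card_zero]

/-- the "columns to the right of the Durfee square" partition -/
def fwdA (n : ℕ) (s : Multiset ℕ) : Multiset ℕ :=
  conjM ((s.filter (fun e => n + 1 ≤ e)).map (fun e => e - n))

/-- the "rows below the Durfee square" partition -/
def fwdB (n : ℕ) (s : Multiset ℕ) : Multiset ℕ :=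
  s.filter (fun e => e ≤ n) - Multiset.replicate (n - cnt s (n + 1)) n

/-- reconstruction -/
def bwd (n : ℕ) (A B : Multiset ℕ) : Multiset ℕ :=
  B + ((conjM A).map (fun e => e + n) +
    Multiset.replicate (n - Multiset.card (conjM A)) n)

lemma replicate_le_filter {s : Multiset ℕ} {n : ℕ} (hcn : n ≤ cnt s n) :
    Multiset.replicate (n - cnt s (n + 1)) n ≤ s.filter (fun e => e ≤ n) := by
  rw [Multiset.le_iff_count]
  intro v
  rw [Multiset.count_replicate, Multiset.count_filter]
  split_ifs with h1 h2
  · subst h1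
    have := cnt_split s n
    omega
  · omega
  all_goals exact Nat.zero_le _

section FwdFacts

variable {N n : ℕ} {s : Multiset ℕ}

lemma fwdA_pos {v : ℕ} (h : v ∈ fwdA n s) : 0 < v := mem_conjM_pos h

lemma fwdA_le (ht : cnt s (n + 1) ≤ n) {v : ℕ} (h : v ∈ fwdA n s) : v ≤ n := by
  have := mem_conjM_le_card h
  rw [Multiset.card_map] at this
  exact le_trans this ht

lemma fwdB_mem {v : ℕ} (h : v ∈ fwdB n s) : v ∈ s ∧ v ≤ n := by
  have h2 : v ∈ s.filter (fun e => e ≤ n) :=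
    Multiset.mem_of_le (tsub_le_self) h
  have h3 := Multiset.of_mem_filter h2
  exact ⟨Multiset.mem_of_mem_filter h2, h3⟩

lemma filter_gt_eq_not (s : Multiset ℕ) (n : ℕ) :
    s.filter (fun e => n + 1 ≤ e) = s.filter (fun e => ¬ e ≤ n) := by
  apply Multiset.filter_congr
  intro x _
  constructor <;> (intro; omega)

lemma fwd_sums (hcn : n ≤ cnt s n) (ht : cnt s (n + 1) ≤ n) :
    (fwdA n s).sum + (fwdB n s).sum + n * n = s.sum := by
  have t := cnt s (n + 1)
  have hA : (fwdA n s).sum + n * cnt s (n + 1) = (s.filter (fun e => n + 1 ≤ e)).sum := by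
    rw [fwdA, sum_conjM]
    have h := sum_map_sub (n := n) (s.filter (fun e => n + 1 ≤ e))
      (fun e he => by have := Multiset.of_mem_filter he; omega)
    simpa [cnt] using h
  have hB : (fwdB n s).sum + (n - cnt s (n + 1)) * n = (s.filter (fun e => e ≤ n)).sum := by
    have hle := replicate_le_filter hcn
    have := tsub_add_cancel_of_le hle
    have hsum := congrArg Multiset.sum this
    rw [Multiset.sum_add, Multiset.sum_replicate, smul_eq_mul] at hsum
    exact hsum
  have hsplit : (s.filter (fun e => e ≤ n)).sum + (s.filter (fun e => n + 1 ≤ e)).sum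
      = s.sum := by
    rw [filter_gt_eq_not]
    conv_rhs => rw [← Multiset.filter_add_not (fun e => e ≤ n) s]
    rw [Multiset.sum_add]
  have hprod : n * cnt s (n + 1) + (n - cnt s (n + 1)) * n = n * n := by
    rw [Nat.sub_mul]
    have h1 : cnt s (n + 1) * n ≤ n * n := Nat.mul_le_mul_right n ht
    have h2 : n * cnt s (n + 1) = cnt s (n + 1) * n := Nat.mul_comm _ _
    omega
  omega

lemma fwd_roundtrip (hcn : n ≤ cnt s n) (hpos : ∀ e ∈ s, 0 < e) :
    bwd n (fwdA n s) (fwdB n s) = s := by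
  set t := cnt s (n + 1) with htdef
  set s' := (s.filter (fun e => n + 1 ≤ e)).map (fun e => e - n) with hs'
  have hs'pos : ∀ e ∈ s', 0 < e := by
    intro e he
    obtain ⟨x, hx, rfl⟩ := Multiset.mem_map.mp he
    have := Multiset.of_mem_filter hx
    omega
  have hcc : conjM (fwdA n s) = s' := conjM_conjM hs'pos
  rw [bwd, hcc]
  have hmap : s'.map (fun e => e + n) = s.filter (fun e => n + 1 ≤ e) := by
    rw [hs', Multiset.map_map]
    rw [show ((fun e => e + n) ∘ fun e => e - n) = fun e : ℕ => e - n + n from rfl]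
    rw [Multiset.map_congr rfl (fun x hx => by
      have := Multiset.of_mem_filter hx
      omega : ∀ x ∈ s.filter (fun e => n + 1 ≤ e), x - n + n = x)]
    exact Multiset.map_id _
  have hcard : Multiset.card s' = t := by rw [hs', Multiset.card_map]; rfl
  rw [hmap, hcard, fwdB]
  have hle := replicate_le_filter hcn
  calc s.filter (fun e => e ≤ n) - Multiset.replicate (n - t) n +
        (s.filter (fun e => n + 1 ≤ e) + Multiset.replicate (n - t) n)
      = (s.filter (fun e => e ≤ n) - Multiset.replicate (n - t) n +
          Multiset.replicate (n - t) n) + s.filter (fun e => n + 1 ≤ e) := by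
        rw [add_comm (s.filter (fun e => n + 1 ≤ e)) (Multiset.replicate (n - t) n),
          ← add_assoc]
    _ = s.filter (fun e => e ≤ n) + s.filter (fun e => n + 1 ≤ e) := by
        rw [tsub_add_cancel_of_le hle]
    _ = s := by
        rw [filter_gt_eq_not]
        exact Multiset.filter_add_not _ _

end FwdFacts


section BwdFacts

variable {n : ℕ} {A B : Multiset ℕ}

lemma bwd_pos (hn : 1 ≤ n) (hBpos : ∀ e ∈ B, 0 < e) : ∀ e ∈ bwd n A B, 0 < e := by
  intro e he
  rw [bwd] at he
  rcases Multiset.mem_add.mp he with h | h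
  · exact hBpos e h
  rcases Multiset.mem_add.mp h with h | h
  · obtain ⟨x, -, rfl⟩ := Multiset.mem_map.mp h
    omega
  · rw [Multiset.eq_of_mem_replicate h]
    omega

lemma bwd_sum (hA : ∀ e ∈ A, e ≤ n) : (bwd n A B).sum = B.sum + A.sum + n * n := by
  have hcard := card_conjM_le hA
  rw [bwd, Multiset.sum_add, Multiset.sum_add, sum_map_add_const, sum_conjM,
    Multiset.sum_replicate, smul_eq_mul]
  have h1 : n * Multiset.card (conjM A) + (n - Multiset.card (conjM A)) * n = n * n := by
    rw [Nat.sub_mul]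
    have h2 : Multiset.card (conjM A) * n ≤ n * n := Nat.mul_le_mul_right n hcard
    have h3 : n * Multiset.card (conjM A) = Multiset.card (conjM A) * n := Nat.mul_comm _ _
    omega
  omega

lemma bwd_filter_gt (hApos : ∀ e ∈ A, 0 < e) (hB : ∀ e ∈ B, e ≤ n) :
    (bwd n A B).filter (fun e => n + 1 ≤ e) = (conjM A).map (fun e => e + n) := by
  rw [bwd, Multiset.filter_add, Multiset.filter_add]
  rw [Multiset.filter_eq_nil.mpr (fun e he => by have := hB e he; omega)]
  rw [Multiset.filter_eq_self.mpr (fun e he => by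
    obtain ⟨x, hx, rfl⟩ := Multiset.mem_map.mp he
    have := mem_conjM_pos hx
    omega)]
  rw [Multiset.filter_eq_nil.mpr (fun e he => by
    rw [Multiset.eq_of_mem_replicate he]; omega)]
  simp

lemma bwd_cnt_succ (hApos : ∀ e ∈ A, 0 < e) (hB : ∀ e ∈ B, e ≤ n) :
    cnt (bwd n A B) (n + 1) = Multiset.card (conjM A) := by
  rw [cnt, bwd_filter_gt hApos hB, Multiset.card_map]

lemma bwd_filter_le (hApos : ∀ e ∈ A, 0 < e) (hB : ∀ e ∈ B, e ≤ n) :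
    (bwd n A B).filter (fun e => e ≤ n)
      = B + Multiset.replicate (n - Multiset.card (conjM A)) n := by
  rw [bwd, Multiset.filter_add, Multiset.filter_add]
  rw [Multiset.filter_eq_self.mpr hB]
  rw [Multiset.filter_eq_nil.mpr (fun e he => by
    obtain ⟨x, hx, rfl⟩ := Multiset.mem_map.mp he
    have := mem_conjM_pos hx
    omega)]
  rw [Multiset.filter_eq_self.mpr (fun e he => by
    rw [Multiset.eq_of_mem_replicate he])]
  simp

lemma bwd_fwdA (hApos : ∀ e ∈ A, 0 < e) (hB : ∀ e ∈ B, e ≤ n) :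
    fwdA n (bwd n A B) = A := by
  rw [fwdA, bwd_filter_gt hApos hB, Multiset.map_map]
  rw [show ((fun e => e - n) ∘ fun e => e + n) = fun e : ℕ => e + n - n from rfl]
  rw [Multiset.map_congr rfl (fun x _ => by omega : ∀ x ∈ conjM A, x + n - n = x)]
  rw [Multiset.map_id']
  exact conjM_conjM hApos

lemma bwd_fwdB (hApos : ∀ e ∈ A, 0 < e) (hB : ∀ e ∈ B, e ≤ n) :
    fwdB n (bwd n A B) = B := by
  rw [fwdB, bwd_cnt_succ hApos hB, bwd_filter_le hApos hB]
  exact add_tsub_cancel_right _ _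

lemma bwd_cnt_ge (hA : ∀ e ∈ A, e ≤ n) : n ≤ cnt (bwd n A B) n := by
  have hcard := card_conjM_le hA
  rw [bwd, cnt_add, cnt_add, cnt_replicate]
  have h1 : cnt ((conjM A).map (fun e => e + n)) n = Multiset.card (conjM A) := by
    rw [cnt, Multiset.filter_eq_self.mpr (fun e he => by
      obtain ⟨x, -, rfl⟩ := Multiset.mem_map.mp he; omega), Multiset.card_map]
  rw [h1, if_pos le_rfl]
  omega

lemma bwd_cnt_gt (hA : ∀ e ∈ A, e ≤ n) (hB : ∀ e ∈ B, e ≤ n) {k : ℕ} (hk : n + 1 ≤ k) :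
    cnt (bwd n A B) k ≤ n := by
  have hcard := card_conjM_le hA
  rw [bwd, cnt_add, cnt_add, cnt_replicate]
  rw [show cnt B k = 0 from by
    rw [cnt, Multiset.card_eq_zero, Multiset.filter_eq_nil]
    intro e he; have := hB e he; omega]
  have h1 : cnt ((conjM A).map (fun e => e + n)) k ≤ Multiset.card (conjM A) := by
    have := cnt_le_card ((conjM A).map (fun e => e + n)) k
    rwa [Multiset.card_map] at this
  rw [if_neg (by omega)]
  omega

end BwdFacts


lemma sum_filter_le (p : ℕ → Prop) [DecidablePred p] (s : Multiset ℕ) :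
    (s.filter p).sum ≤ s.sum := by
  conv_rhs => rw [← Multiset.filter_add_not p s]
  rw [Multiset.sum_add]
  omega

/-- The size of the Durfee square of a partition. -/
def durfee {N : ℕ} (p : Nat.Partition N) : ℕ :=
  Nat.findGreatest (fun i => i ≤ cnt p.parts i) N

lemma durfee_le {N : ℕ} (p : Nat.Partition N) : durfee p ≤ N :=
  Nat.findGreatest_le N

lemma durfee_cnt_lower {N : ℕ} (p : Nat.Partition N) (h : durfee p ≠ 0) :
    durfee p ≤ cnt p.parts (durfee p) :=
  (Nat.findGreatest_eq_iff.mp (rfl : durfee p = durfee p)).2.1 h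

lemma durfee_cnt_upper {N : ℕ} (p : Nat.Partition N) :
    cnt p.parts (durfee p + 1) ≤ durfee p := by
  by_cases h : durfee p + 1 ≤ N
  · have h2 := (Nat.findGreatest_eq_iff.mp (rfl : durfee p = durfee p)).2.2
      (show durfee p < durfee p + 1 by omega) h
    have h3 : ¬ (durfee p + 1 ≤ cnt p.parts (durfee p + 1)) := h2
    omega
  · have hsum : p.parts.sum = N := p.parts_sum
    have := cnt_eq_zero p.parts (j := durfee p + 1) (by omega)
    omega

lemma durfee_sq_le {N : ℕ} (p : Nat.Partition N) : durfee p * durfee p ≤ N := by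
  rcases Nat.eq_zero_or_pos (durfee p) with h | h
  · simp [h]
  have hd := durfee_cnt_lower p (by omega)
  have h1 : Multiset.card (p.parts.filter (fun t => durfee p ≤ t)) • durfee p
      ≤ (p.parts.filter (fun t => durfee p ≤ t)).sum :=
    Multiset.card_nsmul_le_sum (fun x hx => Multiset.of_mem_filter hx)
  rw [smul_eq_mul] at h1
  have h2 := sum_filter_le (fun t => durfee p ≤ t) p.parts
  have h3 : durfee p * durfee p ≤ cnt p.parts (durfee p) * durfee p :=
    Nat.mul_le_mul_right _ hd
  have h4 : p.parts.sum = N := p.parts_sum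
  rw [cnt] at hd h3
  omega

lemma durfee_pos {N : ℕ} (hN : 1 ≤ N) (p : Nat.Partition N) : 1 ≤ durfee p := by
  apply Nat.le_findGreatest hN
  have hne : p.parts ≠ 0 := by
    intro h0
    have := p.parts_sum
    rw [h0] at this
    simp at this
    omega
  obtain ⟨e, he⟩ := Multiset.exists_mem_of_ne_zero hne
  have hpos := p.parts_pos he
  have := (cnt_pos_iff p.parts 1).mpr ⟨e, he, by omega⟩
  omega

lemma durfee_eq_of_cnt {N n : ℕ} (hn : 1 ≤ n) (hnN : n * n ≤ N) (q : Nat.Partition N)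
    (hge : n ≤ cnt q.parts n) (hgt : ∀ k, n + 1 ≤ k → cnt q.parts k ≤ n) :
    durfee q = n := by
  rw [durfee, Nat.findGreatest_eq_iff]
  have hnn : n ≤ n * n := Nat.le_mul_of_pos_left n hn
  refine ⟨by omega, fun _ => hge, fun k hk _ => ?_⟩
  have := hgt k (by omega)
  omega

/-- Partitions of `m` with all parts at most `n`. -/
def PlF (n m : ℕ) : Finset (Nat.Partition m) :=
  Finset.univ.filter (fun p => ∀ j ∈ p.parts, j ≤ n)

/-- forward map of the Durfee bijection -/
def toSig (N n : ℕ) (p : Nat.Partition N) :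
    Σ ab : ℕ × ℕ, Nat.Partition ab.1 × Nat.Partition ab.2 :=
  ⟨((fwdA n p.parts).sum, (fwdB n p.parts).sum),
   ⟨⟨fwdA n p.parts, fun h => fwdA_pos h, rfl⟩,
    ⟨fwdB n p.parts, fun h => p.parts_pos (fwdB_mem h).1, rfl⟩⟩⟩

lemma sig_ext {a b a' b' : ℕ} {A : Nat.Partition a} {B : Nat.Partition b}
    {A' : Nat.Partition a'} {B' : Nat.Partition b'}
    (hA : A.parts = A'.parts) (hB : B.parts = B'.parts) :
    (⟨(a, b), (A, B)⟩ : Σ ab : ℕ × ℕ, Nat.Partition ab.1 × Nat.Partition ab.2)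
      = ⟨(a', b'), (A', B')⟩ := by
  have ha : a = a' := by rw [← A.parts_sum, ← A'.parts_sum, hA]
  have hb : b = b' := by rw [← B.parts_sum, ← B'.parts_sum, hB]
  subst ha
  subst hb
  rw [show A = A' from Nat.Partition.ext hA, show B = B' from Nat.Partition.ext hB]

lemma mem_target_iff {N n : ℕ} {x : Σ ab : ℕ × ℕ, Nat.Partition ab.1 × Nat.Partition ab.2} :
    x ∈ (Finset.HasAntidiagonal.antidiagonal (N - n * n)).sigma (fun ab => PlF n ab.1 ×ˢ PlF n ab.2) ↔
      (x.1.1 + x.1.2 = N - n * n) ∧ (∀ j ∈ x.2.1.parts, j ≤ n) ∧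
        (∀ j ∈ x.2.2.parts, j ≤ n) := by
  rw [Finset.mem_sigma, Finset.mem_product, Finset.HasAntidiagonal.mem_antidiagonal]
  simp only [PlF, Finset.mem_filter, Finset.mem_univ, true_and]

lemma card_durfee_eq (N n : ℕ) (hn : 1 ≤ n) (hnN : n * n ≤ N) :
    (Finset.univ.filter (fun p : Nat.Partition N => durfee p = n)).card =
      ∑ ab ∈ Finset.HasAntidiagonal.antidiagonal (N - n * n), (PlF n ab.1).card * (PlF n ab.2).card := by
  have hrhs : ∑ ab ∈ Finset.HasAntidiagonal.antidiagonal (N - n * n), (PlF n ab.1).card * (PlF n ab.2).card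
      = ((Finset.HasAntidiagonal.antidiagonal (N - n * n)).sigma
          (fun ab => PlF n ab.1 ×ˢ PlF n ab.2)).card := by
    rw [Finset.card_sigma]
    exact Finset.sum_congr rfl (fun ab _ => (Finset.card_product _ _).symm)
  rw [hrhs]
  have hbsum : ∀ x, x ∈ (Finset.HasAntidiagonal.antidiagonal (N - n * n)).sigma
      (fun ab => PlF n ab.1 ×ˢ PlF n ab.2) →
      (bwd n x.2.1.parts x.2.2.parts).sum = N := by
    intro x hx
    obtain ⟨hsum, hA, hB⟩ := mem_target_iff.mp hx
    rw [bwd_sum hA, x.2.1.parts_sum, x.2.2.parts_sum]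
    omega
  refine Finset.card_bij' (fun p _ => toSig N n p)
    (fun x hx => ⟨bwd n x.2.1.parts x.2.2.parts,
      fun h => bwd_pos hn (fun e he => x.2.2.parts_pos he) _ h, hbsum x hx⟩)
    ?_ ?_ ?_ ?_
  · -- toSig lands in target
    intro p hp
    have hdur : durfee p = n := (Finset.mem_filter.mp hp).2
    have hcn : n ≤ cnt p.parts n := by
      have := durfee_cnt_lower p (by omega)
      rwa [hdur] at this
    have ht : cnt p.parts (n + 1) ≤ n := by
      have := durfee_cnt_upper p
      rwa [hdur] at this
    rw [mem_target_iff]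
    refine ⟨?_, fun j hj => fwdA_le ht hj, fun j hj => (fwdB_mem hj).2⟩
    have := fwd_sums hcn ht
    rw [p.parts_sum] at this
    simp only [toSig]
    omega
  · -- bwd lands in the fiber
    intro x hx
    obtain ⟨hsum, hA, hB⟩ := mem_target_iff.mp hx
    rw [Finset.mem_filter]
    refine ⟨Finset.mem_univ _, ?_⟩
    exact durfee_eq_of_cnt hn hnN _ (bwd_cnt_ge hA)
      (fun k hk => bwd_cnt_gt hA hB (k := k) (by omega))
  · -- left inverse
    intro p hp
    have hdur : durfee p = n := (Finset.mem_filter.mp hp).2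
    have hcn : n ≤ cnt p.parts n := by
      have := durfee_cnt_lower p (by omega)
      rwa [hdur] at this
    apply Nat.Partition.ext
    exact fwd_roundtrip hcn (fun e he => p.parts_pos he)
  · -- right inverse
    intro x hx
    obtain ⟨hsum, hA, hB⟩ := mem_target_iff.mp hx
    obtain ⟨⟨a, b⟩, A, B⟩ := x
    exact sig_ext (bwd_fwdA (fun e he => A.parts_pos he) hB)
      (bwd_fwdB (fun e he => A.parts_pos he) hB)

lemma card_partition_sum (N : ℕ) (hN : 1 ≤ N) :
    Fintype.card (Nat.Partition N) =
      ∑ n ∈ Finset.Icc 1 N, (if n * n ≤ N then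
        ∑ ab ∈ Finset.HasAntidiagonal.antidiagonal (N - n * n), (PlF n ab.1).card * (PlF n ab.2).card
        else 0) := by
  rw [← Finset.card_univ]
  rw [Finset.card_eq_sum_card_fiberwise (f := durfee) (t := Finset.Icc 1 N)
    (fun p _ => Finset.mem_Icc.mpr ⟨durfee_pos hN p, durfee_le p⟩)]
  apply Finset.sum_congr rfl
  intro n hn
  obtain ⟨hn1, -⟩ := Finset.mem_Icc.mp hn
  split_ifs with h
  · exact card_durfee_eq N n hn1 h
  · rw [Finset.card_eq_zero, Finset.filter_eq_empty_iff]
    intro p _ hdur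
    have := durfee_sq_le p
    rw [hdur] at this
    omega


end DurfeeAux

namespace DurfeeGF

noncomputable section

open PowerSeries Finset
open Finset.HasAntidiagonal

open scoped Classical

variable {α : Type*}

/-- A convenience constructor for the power series whose coefficients indicate a subset. -/
def indicatorSeries (α : Type*) [Semiring α] (s : Set ℕ) : PowerSeries α :=
  PowerSeries.mk fun n => if n ∈ s then 1 else 0

theorem coeff_indicator (s : Set ℕ) [Semiring α] (n : ℕ) :
    coeff n (indicatorSeries α s) = if n ∈ s then 1 else 0 :=
  coeff_mk _ _

theorem coeff_indicator_pos (s : Set ℕ) [Semiring α] (n : ℕ) (h : n ∈ s) :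
    coeff n (indicatorSeries α s) = 1 := by rw [coeff_indicator, if_pos h]

theorem coeff_indicator_neg (s : Set ℕ) [Semiring α] (n : ℕ) (h : n ∉ s) :
    coeff n (indicatorSeries α s) = 0 := by rw [coeff_indicator, if_neg h]

theorem constantCoeff_indicator (s : Set ℕ) [Semiring α] :
    constantCoeff (indicatorSeries α s) = if 0 ∈ s then 1 else 0 :=
  rfl

theorem num_series' [Field α] (i : ℕ) :
    (1 - (X : PowerSeries α) ^ (i + 1))⁻¹ = indicatorSeries α {k | i + 1 ∣ k} := by
  rw [PowerSeries.inv_eq_iff_mul_eq_one]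
  · ext n
    cases n with
    | zero => simp [mul_sub, zero_pow, constantCoeff_indicator]
    | succ n =>
      simp only [coeff_one, if_false, mul_sub, mul_one, coeff_indicator,
        LinearMap.map_sub, reduceCtorEq]
      simp_rw [coeff_mul, coeff_X_pow, coeff_indicator, @boole_mul _ _ _ _]
      rw [@sum_ite _ _ _ _ _ (fun _ => Classical.propDecidable _), sum_ite]
      simp_rw [@filter_filter _ _ _ _ _, sum_const_zero, add_zero, sum_const, nsmul_eq_mul, mul_one,
        sub_eq_iff_eq_add, zero_add]
      symm
      split_ifs with h
      · suffices #{a ∈ antidiagonal (n + 1) | i + 1 ∣ a.fst ∧ a.snd = i + 1} = 1 by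
          simp only [Set.mem_setOf_eq]; convert congr_arg ((↑) : ℕ → α) this; norm_cast
        rw [card_eq_one]
        cases' h with p hp
        refine ⟨((i + 1) * (p - 1), i + 1), ?_⟩
        ext ⟨a₁, a₂⟩
        simp only [mem_filter, Prod.mk.injEq, HasAntidiagonal.mem_antidiagonal, mem_singleton]
        constructor
        · rintro ⟨a_left, ⟨a, rfl⟩, rfl⟩
          refine ⟨?_, rfl⟩
          rw [Nat.mul_sub_left_distrib, ← hp, ← a_left, mul_one, Nat.add_sub_cancel]
        · rintro ⟨rfl, rfl⟩
          match p with
          | 0 => rw [mul_zero] at hp; cases hp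
          | p + 1 => rw [hp]; simp [mul_add]
      · suffices #{a ∈ antidiagonal (n + 1) | i + 1 ∣ a.fst ∧ a.snd = i + 1} = 0 by
          simp only [Set.mem_setOf_eq]; convert congr_arg ((↑) : ℕ → α) this; norm_cast
        rw [card_eq_zero]
        apply eq_empty_of_forall_notMem
        simp only [Prod.forall, mem_filter, not_and, HasAntidiagonal.mem_antidiagonal]
        rintro _ h₁ h₂ ⟨a, rfl⟩ rfl
        apply h
        simp [← h₂]
  · simp [zero_pow]

-- The main workhorse of the partition theorem proof.
theorem partialGF_prop (α : Type*) [CommSemiring α] (n : ℕ) (s : Finset ℕ) (hs : ∀ i ∈ s, 0 < i)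
    (c : ℕ → Set ℕ) (hc : ∀ i, i ∉ s → 0 ∈ c i) :
    #{p : n.Partition | (∀ j, p.parts.count j ∈ c j) ∧ ∀ j ∈ p.parts, j ∈ s} =
      coeff n (∏ i ∈ s, indicatorSeries α ((· * i) '' c i)) := by
  simp_rw [coeff_prod, coeff_indicator, prod_boole, sum_boole]
  apply congr_arg
  simp only [mem_univ, forall_true_left, not_and, not_forall, exists_prop,
    Set.mem_image, not_exists]
  set φ : (a : Nat.Partition n) →
    a ∈ filter (fun p ↦ (∀ (j : ℕ), Multiset.count j p.parts ∈ c j) ∧ ∀ j ∈ p.parts, j ∈ s) univ →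
    ℕ →₀ ℕ := fun p _ => {
      toFun := fun i => Multiset.count i p.parts • i
      support := Finset.filter (fun i => i ≠ 0) p.parts.toFinset
      mem_support_toFun := fun a => by
        simp only [smul_eq_mul, ne_eq, mul_eq_zero, Multiset.count_eq_zero]
        rw [not_or, not_not]
        simp only [Multiset.mem_toFinset, not_not, mem_filter] }
  refine Finset.card_bij φ ?_ ?_ ?_
  · intro a ha
    simp only [φ, not_forall, not_exists, not_and, exists_prop, mem_filter]
    rw [mem_finsuppAntidiag]
    dsimp only [ne_eq, smul_eq_mul, id_eq, eq_mpr_eq_cast, le_eq_subset, Finsupp.coe_mk]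
    simp only [mem_univ, forall_true_left, not_and, not_forall, exists_prop,
      mem_filter, true_and] at ha
    refine ⟨⟨?_, fun i ↦ ?_⟩, fun i _ ↦ ⟨a.parts.count i, ha.1 i, rfl⟩⟩
    · conv_rhs => simp [← a.parts_sum]
      rw [sum_multiset_count_of_subset _ s]
      · simp only [smul_eq_mul]
      · intro i
        simp only [Multiset.mem_toFinset, not_not, mem_filter]
        apply ha.2
    · simp only [ne_eq, Multiset.mem_toFinset, not_not, mem_filter, and_imp]
      exact fun hi _ ↦ ha.2 i hi
  · intro p₁ hp₁ p₂ hp₂ h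
    apply Nat.Partition.ext
    simp only [true_and, mem_univ, mem_filter] at hp₁ hp₂
    ext i
    simp only [φ, ne_eq, Multiset.mem_toFinset, not_not, smul_eq_mul, Finsupp.mk.injEq] at h
    by_cases hi : i = 0
    · rw [hi]
      rw [Multiset.count_eq_zero_of_notMem]
      · rw [Multiset.count_eq_zero_of_notMem]
        intro a; exact Nat.lt_irrefl 0 (hs 0 (hp₂.2 0 a))
      intro a; exact Nat.lt_irrefl 0 (hs 0 (hp₁.2 0 a))
    · rw [← mul_left_inj' hi]
      rw [funext_iff] at h
      exact h.2 i
  · simp only [φ, mem_filter, mem_finsuppAntidiag, mem_univ, exists_prop, true_and, and_assoc]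
    rintro f ⟨hf, hf₃, hf₄⟩
    have hf' : f ∈ finsuppAntidiag s n := mem_finsuppAntidiag.mpr ⟨hf, hf₃⟩
    simp only [mem_finsuppAntidiag] at hf'
    refine ⟨⟨∑ i ∈ s, Multiset.replicate (f i / i) i, ?_, ?_⟩, ?_, ?_, ?_⟩
    · intro i hi
      simp only [exists_prop, Multiset.mem_sum, mem_map, Function.Embedding.coeFn_mk] at hi
      rcases hi with ⟨t, ht, z⟩
      apply hs
      rwa [Multiset.eq_of_mem_replicate z]
    · simp_rw [Multiset.sum_sum, Multiset.sum_replicate, Nat.nsmul_eq_mul]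
      rw [← hf'.1]
      refine sum_congr rfl fun i hi => Nat.div_mul_cancel ?_
      rcases hf₄ i hi with ⟨w, _, hw₂⟩
      rw [← hw₂]
      exact dvd_mul_left _ _
    · intro i
      simp_rw [Multiset.count_sum', Multiset.count_replicate, sum_ite_eq']
      split_ifs with h
      · rcases hf₄ i h with ⟨w, hw₁, hw₂⟩
        rwa [← hw₂, Nat.mul_div_cancel _ (hs i h)]
      · exact hc _ h
    · intro i hi
      rw [Multiset.mem_sum] at hi
      rcases hi with ⟨j, hj₁, hj₂⟩
      rwa [Multiset.eq_of_mem_replicate hj₂]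
    · ext i
      simp_rw [Multiset.count_sum', Multiset.count_replicate, sum_ite_eq']
      simp only [ne_eq, Multiset.mem_toFinset, not_not, smul_eq_mul, ite_mul,
        zero_mul, Finsupp.coe_mk]
      split_ifs with h
      · apply Nat.div_mul_cancel
        rcases hf₄ i h with ⟨w, _, hw₂⟩
        apply Dvd.intro_left _ hw₂
      · apply symm
        rw [← Finsupp.notMem_support_iff]
        exact notMem_mono hf'.2 h


theorem coeff_prod_inv_eq (n m : ℕ) (hn : 1 ≤ n) :
    ((DurfeeAux.PlF n m).card : ℚ) =
      PowerSeries.coeff m (∏ k ∈ Finset.Icc 1 n, (1 - (X : PowerSeries ℚ) ^ k)⁻¹) := by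
  have h := partialGF_prop ℚ m (Finset.Icc 1 n) (fun i hi => (Finset.mem_Icc.mp hi).1)
    (fun _ => Set.univ) (fun _ _ => trivial)
  have hset : (Finset.univ.filter (fun p : Nat.Partition m =>
      (∀ j : ℕ, p.parts.count j ∈ (Set.univ : Set ℕ)) ∧ ∀ j ∈ p.parts, j ∈ Finset.Icc 1 n))
      = DurfeeAux.PlF n m := by
    apply Finset.filter_congr
    intro p _
    simp only [Set.mem_univ, forall_const, true_and, Finset.mem_Icc, DurfeeAux.PlF]
    constructor
    · intro hall j hj
      exact (hall j hj).2
    · intro hall j hj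
      exact ⟨p.parts_pos hj, hall j hj⟩
  have hprod : (∏ i ∈ Finset.Icc 1 n, indicatorSeries ℚ ((· * i) '' Set.univ))
      = ∏ k ∈ Finset.Icc 1 n, (1 - (X : PowerSeries ℚ) ^ k)⁻¹ := by
    apply Finset.prod_congr rfl
    intro k hk
    obtain ⟨hk1, -⟩ := Finset.mem_Icc.mp hk
    have := num_series' (α := ℚ) (k - 1)
    rw [Nat.sub_add_cancel hk1] at this
    have hsets : ((fun x => x * k) '' Set.univ) = {j : ℕ | k ∣ j} := by
      ext j
      simp only [Set.mem_image, Set.mem_univ, true_and, Set.mem_setOf_eq]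
      constructor
      · rintro ⟨a, rfl⟩
        exact Dvd.intro_left a rfl
      · rintro ⟨a, rfl⟩
        exact ⟨a, mul_comm a k⟩
    rw [hsets, this]
  rw [← hprod, ← h, ← hset]

theorem inv_prod_sq (n : ℕ) :
    (∏ k ∈ Finset.Icc 1 n, (1 - (X : PowerSeries ℚ) ^ k) ^ 2)⁻¹ =
      (∏ k ∈ Finset.Icc 1 n, (1 - (X : PowerSeries ℚ) ^ k)⁻¹) *
        ∏ k ∈ Finset.Icc 1 n, (1 - (X : PowerSeries ℚ) ^ k)⁻¹ := by
  have hcc : ∀ k ∈ Finset.Icc 1 n, constantCoeff (1 - (X : PowerSeries ℚ) ^ k) = 1 := by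
    intro k hk
    obtain ⟨hk1, -⟩ := Finset.mem_Icc.mp hk
    rw [map_sub, map_pow, constantCoeff_one, constantCoeff_X,
      zero_pow (by omega : k ≠ 0)]
    ring
  rw [PowerSeries.inv_eq_iff_mul_eq_one]
  · rw [← Finset.prod_mul_distrib, ← Finset.prod_mul_distrib]
    rw [Finset.prod_eq_one]
    intro k hk
    have h1 : (1 - (X : PowerSeries ℚ) ^ k)⁻¹ * (1 - (X : PowerSeries ℚ) ^ k) = 1 :=
      PowerSeries.inv_mul_cancel _ (by rw [hcc k hk]; exact one_ne_zero)
    calc (1 - (X : PowerSeries ℚ) ^ k)⁻¹ * (1 - (X : PowerSeries ℚ) ^ k)⁻¹ *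
          (1 - (X : PowerSeries ℚ) ^ k) ^ 2
        = ((1 - (X : PowerSeries ℚ) ^ k)⁻¹ * (1 - (X : PowerSeries ℚ) ^ k)) *
          ((1 - (X : PowerSeries ℚ) ^ k)⁻¹ * (1 - (X : PowerSeries ℚ) ^ k)) := by ring
      _ = 1 := by rw [h1, one_mul]
  · rw [map_prod]
    rw [Finset.prod_eq_one (fun k hk => by rw [map_pow, hcc k hk, one_pow])]
    exact one_ne_zero

end
end DurfeeGF

open PowerSeries

theorem durfee_square_identity :
    ∀ N : ℕ,
      ((Fintype.card (Nat.Partition N) : ℚ)) =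
        PowerSeries.coeff N
          (1 + ∑ n ∈ Finset.Icc 1 N,
            (PowerSeries.X : PowerSeries ℚ) ^ (n ^ 2) *
              (∏ k ∈ Finset.Icc 1 n, (1 - (PowerSeries.X : PowerSeries ℚ) ^ k) ^ 2)⁻¹) := by
  intro N
  rcases Nat.eq_zero_or_pos N with rfl | hN
  · rw [Finset.Icc_eq_empty (by omega), Finset.sum_empty, add_zero]
    simp [Fintype.card_unique]
  · rw [map_add, map_sum]
    rw [show (PowerSeries.coeff (R := ℚ) N) 1 = 0 from by
      rw [PowerSeries.coeff_one, if_neg (by omega)]]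
    rw [zero_add]
    have hterm : ∀ n ∈ Finset.Icc 1 N,
        PowerSeries.coeff N ((X : PowerSeries ℚ) ^ (n ^ 2) *
          (∏ k ∈ Finset.Icc 1 n, (1 - (X : PowerSeries ℚ) ^ k) ^ 2)⁻¹)
        = if n * n ≤ N then ((∑ ab ∈ Finset.HasAntidiagonal.antidiagonal (N - n * n),
            (DurfeeAux.PlF n ab.1).card * (DurfeeAux.PlF n ab.2).card : ℕ) : ℚ) else 0 := by
      intro n hn
      obtain ⟨hn1, -⟩ := Finset.mem_Icc.mp hn
      rw [show n ^ 2 = n * n from sq n]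
      rw [DurfeeGF.inv_prod_sq n, PowerSeries.coeff_X_pow_mul']
      split_ifs with h
      · rw [PowerSeries.coeff_mul]
        push_cast
        apply Finset.sum_congr rfl
        intro ab hab
        rw [← DurfeeGF.coeff_prod_inv_eq n ab.1 hn1, ← DurfeeGF.coeff_prod_inv_eq n ab.2 hn1]
      · rfl
    rw [Finset.sum_congr rfl hterm]
    rw [DurfeeAux.card_partition_sum N hN]
    push_cast
    apply Finset.sum_congr rfl
    intro n hn
    split_ifs <;> simp
end

section
/- Let m, t, B, N be integers with m, N > 0. Write m = 2^u · 3^v · m' and B = 2^r · 3^s · B' with gcd(m',6) = gcd(B',6) = 1 (where if B = 0 we exclude this case, so assume B ≠ 0). Define α = 0 if r = 0, α = min(r,u) if r ∈ {1,2}, α = u if r ≥ 3; define β = 0 if s = 0 and β = v if s ≥ 1; and set Q = 2^α · 3^β · m'. Then for every integer λ with 0 ≤ λ < m/Q, there exists an integer a with gcd(a, 6mN) = 1 such that 24(t + λQ) ≡ 24t·a² + B(a² − 1) (mod 24m). -/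
lemma crt2 (M N a b : ℤ) (h : IsCoprime M N) :
    ∃ z : ℤ, z ≡ a [ZMOD M] ∧ z ≡ b [ZMOD N] := by
  obtain ⟨p, q, hpq⟩ := h
  refine ⟨a * q * N + b * p * M, ?_, ?_⟩
  · rw [Int.modEq_iff_dvd]
    exact ⟨(a - b) * p, by linear_combination (-a) * hpq⟩
  · rw [Int.modEq_iff_dvd]
    exact ⟨(b - a) * q, by linear_combination (-b) * hpq⟩

lemma inv_exists (w n : ℤ) (h : IsCoprime w n) : ∃ c : ℤ, w * c ≡ 1 [ZMOD n] := by
  obtain ⟨p, q, hpq⟩ := h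
  refine ⟨p, ?_⟩
  rw [Int.modEq_iff_dvd]
  exact ⟨q, by linear_combination -hpq⟩

lemma solve_aux (n w T c a : ℤ) (hc : w * c ≡ 1 [ZMOD n])
    (ha : a ^ 2 ≡ 1 + c * T [ZMOD n]) : n ∣ w * (a ^ 2 - 1) - T := by
  have h1 : n ∣ (1 + c * T) - a ^ 2 := ha.dvd
  have h2 : n ∣ 1 - w * c := hc.dvd
  obtain ⟨x, hx⟩ := h1
  obtain ⟨y, hy⟩ := h2
  exact ⟨-w * x - T * y, by linear_combination (-w) * hx + (-T) * hy⟩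

lemma sq_lift_three (k : ℕ) (x : ℤ) (hx : x ≡ 1 [ZMOD 3]) :
    ∃ a : ℤ, ¬ (3:ℤ) ∣ a ∧ a ^ 2 ≡ x [ZMOD 3 ^ k] := by
  induction k with
  | zero => exact ⟨1, by norm_num, by simp [Int.ModEq]⟩
  | succ k ih =>
    rcases Nat.eq_zero_or_pos k with hk | hk
    · subst hk
      refine ⟨1, by norm_num, ?_⟩
      simpa using hx.symm
    obtain ⟨a, ha3, ha⟩ := ih
    obtain ⟨d, hd⟩ : (3:ℤ)^k ∣ x - a ^ 2 := ha.dvd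
    have hsq : ((2 * a) ^ 2) ≡ 1 [ZMOD 3] := by
      have h1 : ((a : ZMod 3)) ≠ 0 := by
        rwa [Ne, ZMod.intCast_zmod_eq_zero_iff_dvd]
      have key : ∀ b : ZMod 3, b ≠ 0 → (2 * b) ^ 2 = 1 := by decide
      have : (((2 * a) ^ 2 : ℤ) : ZMod 3) = ((1 : ℤ) : ZMod 3) := by
        push_cast
        exact key _ h1
      rwa [ZMod.intCast_eq_intCast_iff] at this
    set c : ℤ := d * (2 * a) with hc
    refine ⟨a + c * 3 ^ k, ?_, ?_⟩
    · intro h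
      have h3 : (3:ℤ) ∣ c * 3 ^ k :=
        Dvd.dvd.mul_left (dvd_pow_self 3 hk.ne') c
      exact ha3 ((dvd_add_right h3).mp (by rwa [add_comm] at h))
    · rw [Int.modEq_iff_dvd]
      obtain ⟨e, he⟩ : (3:ℤ) ∣ d * ((2*a)^2 - 1) := Dvd.dvd.mul_left hsq.symm.dvd d
      obtain ⟨f, hf⟩ : (3:ℤ)^(k+1) ∣ 3^k * 3^k := by
        rw [← pow_add]; exact pow_dvd_pow 3 (by omega)
      refine ⟨-e - f * c^2, ?_⟩
      linear_combination hd - (3:ℤ)^k * he - c^2 * hf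

lemma sq_lift_two (k : ℕ) (x : ℤ) (hx : x ≡ 1 [ZMOD 8]) :
    ∃ a : ℤ, Odd a ∧ a ^ 2 ≡ x [ZMOD 2 ^ k] := by
  induction k with
  | zero => exact ⟨1, odd_one, by simp [Int.ModEq]⟩
  | succ k ih =>
    rcases Nat.lt_or_ge k 3 with hk | hk
    · refine ⟨1, odd_one, ?_⟩
      rw [Int.modEq_iff_dvd]
      have : (2:ℤ)^(k+1) ∣ 8 := by
        have : (2:ℤ)^(k+1) ∣ 2^3 := pow_dvd_pow 2 (by omega)
        simpa using this
      calc (2:ℤ)^(k+1) ∣ 8 := this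
        _ ∣ x - 1^2 := by simpa using hx.symm.dvd
    · obtain ⟨a, haodd, ha⟩ := ih
      obtain ⟨d, hd⟩ : (2:ℤ)^k ∣ x - a ^ 2 := ha.dvd
      obtain ⟨g, hg⟩ := haodd
      refine ⟨a + d * 2 ^ (k-1), ⟨g + d * 2^(k-2), ?_⟩, ?_⟩
      · have e1 : (2:ℤ)^(k-1) = 2 * 2^(k-2) := by
          rw [← pow_succ']
          congr 1
          omega
        rw [hg, e1]; ring
      · rw [Int.modEq_iff_dvd]
        have e2 : (2:ℤ)^k = 2^(k-1) * 2 := by rw [← pow_succ]; congr 1; omega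
        obtain ⟨f, hf⟩ : (2:ℤ)^(k+1) ∣ (2^(k-1)) * (2^(k-1)) := by
          rw [← pow_add]; exact pow_dvd_pow 2 (by omega)
        subst hg
        refine ⟨-g*d - f * d^2, ?_⟩
        linear_combination hd + (d + 2*g*d) * e2 - d^2 * hf

lemma coprime_lift (M N a : ℤ) (hMN : M * N ≠ 0) (h : IsCoprime a M) :
    ∃ b : ℤ, b ≡ a [ZMOD M] ∧ IsCoprime b (M * N) := by
  set n1 := M.natAbs
  set n2 := (M * N).natAbs with hn2
  have hdvd : n1 ∣ n2 := Int.natAbs_dvd_natAbs.2 ⟨N, rfl⟩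
  have : NeZero n2 := ⟨by simpa [hn2, Int.natAbs_eq_zero] using hMN⟩
  have hu1 : IsUnit ((a : ZMod n1)) := by
    obtain ⟨p, q, hpq⟩ := h
    have hM0 : ((M : ℤ) : ZMod n1) = 0 := by
      rw [ZMod.intCast_zmod_eq_zero_iff_dvd]
      exact Int.natAbs_dvd.mpr dvd_rfl
    refine IsUnit.of_mul_eq_one ((p : ZMod n1)) ?_
    have := congrArg (fun z : ℤ => (z : ZMod n1)) hpq
    push_cast at this
    rw [hM0] at this
    simpa [mul_comm] using this
  obtain ⟨u, hu⟩ := ZMod.unitsMap_surjective hdvd hu1.unit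
  refine ⟨((u : ZMod n2).val : ℤ), ?_, ?_⟩
  · have : (ZMod.castHom hdvd (ZMod n1)) (u : ZMod n2) = (a : ZMod n1) := by
      have := congrArg (Units.val) hu
      rw [ZMod.unitsMap_def] at this
      simpa using this
    have hval : (((u : ZMod n2).val : ℤ) : ZMod n1) = (a : ZMod n1) := by
      rw [← this]
      push_cast
      rw [ZMod.natCast_val]
      rfl
    have := (ZMod.intCast_eq_intCast_iff _ _ _).1 hval
    have hd : (n1 : ℤ) ∣ a - ((u : ZMod n2).val : ℤ) := this.dvd
    rw [Int.modEq_iff_dvd]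
    exact (Int.natAbs_dvd.mp hd)
  · have hunit : IsUnit (((u : ZMod n2).val : ℕ) : ZMod n2) := by
      rw [ZMod.natCast_val, ZMod.cast_id]
      exact u.isUnit
    have hcop : Nat.Coprime (u : ZMod n2).val n2 := (ZMod.isUnit_iff_coprime _ _).1 hunit
    rw [Int.isCoprime_iff_gcd_eq_one]
    exact hcop


lemma odd_isCoprime_two (x : ℤ) (h : Odd x) : IsCoprime x (2:ℤ) := by
  obtain ⟨g, hg⟩ := h
  exact ⟨1, -g, by linear_combination hg⟩

lemma not_dvd_of_isCoprime (x p : ℤ) (h : IsCoprime x p) (hp : ¬ IsUnit p) :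
    ¬ p ∣ x := fun hd => hp (h.isUnit_of_dvd' hd dvd_rfl)

lemma sq_sub_one_dvd (n a : ℤ) (h : a ≡ 1 [ZMOD n]) : n ∣ a ^ 2 - 1 := by
  obtain ⟨k, hk⟩ := h.dvd
  exact ⟨-k * (a + 1), by linear_combination (-(a:ℤ) - 1) * hk⟩

lemma eight_dvd_sq_sub_one (a : ℤ) (h : Odd a) : (8:ℤ) ∣ a ^ 2 - 1 := by
  obtain ⟨g, hg⟩ := h
  obtain ⟨e, he⟩ := Int.even_mul_succ_self g
  exact ⟨e, by linear_combination (a + 2*g + 1) * hg + 4 * he⟩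

theorem radu_lifting_lemma (m t B N : ℤ) (hm : 0 < m) (hN : 0 < N) (hB : B ≠ 0)
    (u v r s : ℕ) (m' B' : ℤ)
    (hmfac : m = 2 ^ u * 3 ^ v * m') (hm' : Int.gcd m' 6 = 1)
    (hBfac : B = 2 ^ r * 3 ^ s * B') (hB' : Int.gcd B' 6 = 1) :
    ∀ lam : ℤ, 0 ≤ lam →
      lam < m / (2 ^ (if r = 0 then 0 else if r ≤ 2 then min r u else u) *
                  3 ^ (if s = 0 then 0 else v) * m') →
      ∃ a : ℤ, Int.gcd a (6 * m * N) = 1 ∧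
        24 * (t + lam * (2 ^ (if r = 0 then 0 else if r ≤ 2 then min r u else u) *
                  3 ^ (if s = 0 then 0 else v) * m')) ≡
          24 * t * a ^ 2 + B * (a ^ 2 - 1) [ZMOD 24 * m] := by
  intro lam _ _
  set A : ℕ := (if r = 0 then 0 else if r ≤ 2 then min r u else u) with hA
  set Bb : ℕ := (if s = 0 then 0 else v) with hBb
  set Q : ℤ := 2 ^ A * 3 ^ Bb * m' with hQ
  set w : ℤ := 24 * t + B with hw
  -- coprimality basics
  have copm6 : IsCoprime m' (6:ℤ) := Int.isCoprime_iff_gcd_eq_one.2 hm'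
  have copB6 : IsCoprime B' (6:ℤ) := Int.isCoprime_iff_gcd_eq_one.2 hB'
  have h6 : (6:ℤ) = 2 * 3 := by norm_num
  have copm2 : IsCoprime m' (2:ℤ) := (h6 ▸ copm6).of_mul_right_left
  have copm3 : IsCoprime m' (3:ℤ) := (h6 ▸ copm6).of_mul_right_right
  have copB2 : IsCoprime B' (2:ℤ) := (h6 ▸ copB6).of_mul_right_left
  have copB3 : IsCoprime B' (3:ℤ) := (h6 ▸ copB6).of_mul_right_right
  have hB'odd : Odd B' := by
    rcases Int.even_or_odd B' with h | h
    · exfalso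
      obtain ⟨k, hk⟩ := h
      exact not_dvd_of_isCoprime B' 2 copB2 (by rw [Int.isUnit_iff]; norm_num)
        ⟨k, by omega⟩
    · exact h
  have hB'3 : ¬ (3:ℤ) ∣ B' :=
    not_dvd_of_isCoprime B' 3 copB3 (by rw [Int.isUnit_iff]; norm_num)
  -- the part mod m'
  have Pm : ∀ a : ℤ, a ≡ 1 [ZMOD m'] → m' ∣ w * (a ^ 2 - 1) - 24 * lam * Q := by
    intro a ha
    refine dvd_sub ((sq_sub_one_dvd m' a ha).mul_left w) ⟨24 * lam * (2 ^ A * 3 ^ Bb), by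
      rw [hQ]; ring⟩
  -- the part mod 3 ^ (v+1)
  have P3 : ∃ a3 : ℤ, ¬ (3:ℤ) ∣ a3 ∧ ∀ a : ℤ, a ≡ a3 [ZMOD (3:ℤ) ^ (v+1)] →
      (3:ℤ) ^ (v+1) ∣ w * (a ^ 2 - 1) - 24 * lam * Q := by
    by_cases hs : s = 0
    · have hw3 : ¬ (3:ℤ) ∣ w := by
        intro h
        have h1 : (3:ℤ) ∣ 2 ^ r * B' := by
          have : (2:ℤ) ^ r * B' = w - 24 * t - 0 := by
            rw [hw, hBfac, hs]; ring
          rw [this]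
          exact dvd_sub (dvd_sub h ⟨8 * t, by ring⟩) (dvd_zero 3)
        rcases (Int.prime_three.dvd_mul).1 h1 with h2 | h2
        · have := Int.prime_three.dvd_of_dvd_pow h2
          norm_num at this
        · exact hB'3 h2
      have cop : IsCoprime w ((3:ℤ) ^ (v+1)) :=
        ((Int.prime_three.coprime_iff_not_dvd.2 hw3).symm).pow_right
      obtain ⟨c, hc⟩ := inv_exists w _ cop
      have hx : (1 + c * (24 * lam * Q)) ≡ 1 [ZMOD 3] := by
        rw [Int.modEq_iff_dvd]
        exact ⟨-(c * 8 * lam * Q), by ring⟩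
      obtain ⟨a3, h3, ha3⟩ := sq_lift_three (v+1) _ hx
      refine ⟨a3, h3, fun a ha => ?_⟩
      exact solve_aux _ w (24 * lam * Q) c a hc ((Int.ModEq.pow 2 ha).trans ha3)
    · have hBbv : Bb = v := by rw [hBb]; simp [hs]
      refine ⟨1, by norm_num, fun a ha => ?_⟩
      refine dvd_sub ((sq_sub_one_dvd _ a ha).mul_left w) ⟨8 * lam * 2 ^ A * m', by
        rw [hQ, hBbv]; ring⟩
  -- the part mod 2 ^ (u+3)
  have P2 : ∃ a2 : ℤ, Odd a2 ∧ ∀ a : ℤ, a ≡ a2 [ZMOD (2:ℤ) ^ (u+3)] → Odd a →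
      (2:ℤ) ^ (u+3) ∣ w * (a ^ 2 - 1) - 24 * lam * Q := by
    by_cases hr0 : r = 0
    · -- w is odd, invert it
      have hwodd : Odd w := by
        have : w = 24 * t + 3 ^ s * B' := by rw [hw, hBfac, hr0]; ring
        rw [this]
        exact Even.add_odd ⟨12 * t, by ring⟩ ((Odd.pow (⟨1, by norm_num⟩ : Odd (3:ℤ))).mul hB'odd)
      have cop : IsCoprime w ((2:ℤ) ^ (u+3)) := (odd_isCoprime_two w hwodd).pow_right
      obtain ⟨c, hc⟩ := inv_exists w _ cop
      have hx : (1 + c * (24 * lam * Q)) ≡ 1 [ZMOD 8] := by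
        rw [Int.modEq_iff_dvd]
        exact ⟨-(c * 3 * lam * Q), by ring⟩
      obtain ⟨a2, h2, ha2⟩ := sq_lift_two (u+3) _ hx
      refine ⟨a2, h2, fun a ha _ => ?_⟩
      exact solve_aux _ w (24 * lam * Q) c a hc ((Int.ModEq.pow 2 ha).trans ha2)
    · have hw0 : w = 2 ^ r * (2 ^ (3-r) * 3 * t + 3 ^ s * B') ∨ 3 ≤ r := by
        rcases Nat.lt_or_ge r 3 with h | h
        · left
          have e : (2:ℤ) ^ r * 2 ^ (3-r) = 8 := by
            rw [← pow_add, show r + (3-r) = 3 by omega]; norm_num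
          rw [hw, hBfac]
          linear_combination (-3) * t * e
        · right; exact h
      by_cases hr2 : r ≤ 2
      · have hAmin : A = min r u := by rw [hA]; simp [hr0, hr2]
        obtain hw0 | hr3 := hw0
        swap
        · omega
        set w₀ : ℤ := 2 ^ (3-r) * 3 * t + 3 ^ s * B' with hw₀
        have hw₀odd : Odd w₀ := by
          refine Even.add_odd ⟨2 ^ (3-r-1) * 3 * t, ?_⟩ ((Odd.pow (⟨1, by norm_num⟩ : Odd (3:ℤ))).mul hB'odd)
          have : (2:ℤ) ^ (3-r) = 2 ^ (3-r-1) * 2 := by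
            rw [← pow_succ, show 3-r-1+1 = 3-r by omega]
          rw [this]; ring
        by_cases hur : r ≤ u
        · -- A = r ; solve with inverse of w₀ mod 2^(u+3-r)
          have hAr : A = r := by rw [hAmin]; omega
          have cop : IsCoprime w₀ ((2:ℤ) ^ (u+3-r)) := (odd_isCoprime_two _ hw₀odd).pow_right
          obtain ⟨c, hc⟩ := inv_exists w₀ _ cop
          set T : ℤ := 24 * lam * 3 ^ Bb * m' with hT
          have hx : (1 + c * T) ≡ 1 [ZMOD 8] := by
            rw [Int.modEq_iff_dvd]
            exact ⟨-(c * 3 * lam * 3 ^ Bb * m'), by rw [hT]; ring⟩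
          obtain ⟨a2, h2, ha2⟩ := sq_lift_two (u+3-r) _ hx
          refine ⟨a2, h2, fun a ha _ => ?_⟩
          have ha' : a ≡ a2 [ZMOD (2:ℤ) ^ (u+3-r)] :=
            ha.of_dvd (pow_dvd_pow 2 (by omega))
          obtain ⟨k, hk⟩ := solve_aux _ w₀ T c a hc ((Int.ModEq.pow 2 ha').trans ha2)
          have epow : (2:ℤ) ^ r * 2 ^ (u+3-r) = 2 ^ (u+3) := by
            rw [← pow_add, show r + (u+3-r) = u+3 by omega]
          refine ⟨k, ?_⟩
          rw [hQ, hAr]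
          linear_combination (a ^ 2 - 1) * hw0 + 2 ^ r * hk + k * epow +
            (2:ℤ) ^ r * (a ^ 2 - 1) * (0 : ℤ)
        · -- u < r : any odd a works
          have hAu : A = u := by rw [hAmin]; omega
          refine ⟨1, odd_one, fun a _ haodd => ?_⟩
          obtain ⟨e, he⟩ := eight_dvd_sq_sub_one a haodd
          have epow : (2:ℤ) ^ (u+3) * 2 ^ (r-u) = 2 ^ r * 8 := by
            rw [← pow_add, show u+3+(r-u) = r + 3 by omega, pow_add]; norm_num
          refine dvd_sub ⟨2 ^ (r-u) * w₀ * e, ?_⟩ ⟨3 * 3 ^ Bb * lam * m', by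
            rw [hQ, hAu]; ring⟩
          linear_combination (a ^ 2 - 1) * hw0 + 2 ^ r * w₀ * he - w₀ * e * epow
      · -- r ≥ 3 : A = u and 2^(u+3) divides both parts
        have hAu : A = u := by rw [hA]; simp [hr0, hr2]
        refine ⟨1, odd_one, fun a ha _ => ?_⟩
        refine dvd_sub ((sq_sub_one_dvd _ a ha).mul_left w) ⟨3 * 3 ^ Bb * lam * m', by
          rw [hQ, hAu]; ring⟩
  -- assemble via CRT
  obtain ⟨a2, ha2odd, hP2⟩ := P2
  obtain ⟨a3, ha33, hP3⟩ := P3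
  have cop23 : IsCoprime ((2:ℤ) ^ (u+3)) ((3:ℤ) ^ (v+1)) :=
    IsCoprime.pow (Int.isCoprime_iff_gcd_eq_one.2 (by norm_num))
  obtain ⟨z, hz2, hz3⟩ := crt2 _ _ a2 a3 cop23
  have cop6m' : IsCoprime ((2:ℤ) ^ (u+3) * 3 ^ (v+1)) m' :=
    IsCoprime.mul_left (copm2.symm.pow_left) (copm3.symm.pow_left)
  obtain ⟨a0, hz, hm1⟩ := crt2 _ m' z 1 cop6m'
  have ha02 : a0 ≡ a2 [ZMOD (2:ℤ) ^ (u+3)] :=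
    (hz.of_dvd (dvd_mul_right _ _)).trans hz2
  have ha03 : a0 ≡ a3 [ZMOD (3:ℤ) ^ (v+1)] :=
    (hz.of_dvd (dvd_mul_left _ _)).trans hz3
  have hOdd : Odd a0 := by
    obtain ⟨k, hk⟩ : (2:ℤ) ∣ a2 - a0 := (ha02.of_dvd (dvd_pow_self 2 (by omega))).dvd
    obtain ⟨g, hg⟩ := ha2odd
    rcases Int.even_or_odd a0 with h | h
    · obtain ⟨e, he⟩ := h
      omega
    · exact h
  have h3nd : ¬ (3:ℤ) ∣ a0 := by
    intro h
    have h3 : (3:ℤ) ∣ a3 - a0 := (ha03.of_dvd (dvd_pow_self 3 (by omega))).dvd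
    exact ha33 (by omega)
  have e24 : (24 * m : ℤ) = 2 ^ (u+3) * 3 ^ (v+1) * m' := by rw [hmfac]; ring
  have hE : (24 * m : ℤ) ∣ w * (a0 ^ 2 - 1) - 24 * lam * Q := by
    rw [e24]
    exact IsCoprime.mul_dvd cop6m'
      (IsCoprime.mul_dvd cop23 (hP2 a0 ha02 hOdd) (hP3 a0 ha03)) (Pm a0 hm1)
  -- a0 is coprime to 24m
  have cop0 : IsCoprime a0 (24 * m) := by
    rw [e24]
    have c2 : IsCoprime a0 (2:ℤ) := odd_isCoprime_two a0 hOdd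
    have c3 : IsCoprime a0 (3:ℤ) := (Int.prime_three.coprime_iff_not_dvd.2 h3nd).symm
    have cm : IsCoprime a0 m' := by
      obtain ⟨k, hk⟩ := hm1.dvd
      exact ⟨1, k, by linear_combination -hk⟩
    exact ((c2.pow_right.mul_right c3.pow_right)).mul_right cm
  -- lift to a unit mod 24mN
  have hMN0 : (24 * m) * N ≠ 0 := by positivity
  obtain ⟨b, hb, hbcop⟩ := coprime_lift (24 * m) N a0 hMN0 cop0
  refine ⟨b, ?_, ?_⟩
  · have : IsCoprime b (6 * m * N) :=
      IsCoprime.of_isCoprime_of_dvd_right hbcop ⟨4, by ring⟩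
    exact Int.isCoprime_iff_gcd_eq_one.1 this
  · have hE' : (24 * m : ℤ) ∣ w * (b ^ 2 - 1) - 24 * lam * Q := by
      obtain ⟨k1, hk1⟩ := (Int.ModEq.pow 2 hb).dvd
      obtain ⟨k2, hk2⟩ := hE
      exact ⟨k2 - w * k1, by linear_combination hk2 - w * hk1⟩
    rw [Int.modEq_iff_dvd]
    obtain ⟨k, hk⟩ := hE'
    exact ⟨k, by linear_combination hk⟩
end

section
/- Let c be a positive integer and d an integer with gcd(d,c) = 1. Then 6c · s(d,c) is an integer, where s(d,c) is the Dedekind sum. -/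
lemma sum_Ico_one_int {M : Type*} [AddCommMonoid M] (c : ℤ) (f : ℤ → M) :
    ∑ r ∈ Finset.Ico (1 : ℤ) c, f r = ∑ i ∈ Finset.range (c - 1).toNat, f ((i : ℤ) + 1) := by
  refine Finset.sum_nbij' (fun r => (r - 1).toNat) (fun i => (i : ℤ) + 1) ?_ ?_ ?_ ?_ ?_ <;>
      intro a ha <;> simp_all [Finset.mem_Ico, Finset.mem_range]
  · omega
  · omega
  · omega
  · congr 1; omega

lemma two_mul_sum_range (n : ℕ) :
    2 * ∑ i ∈ Finset.range n, ((i : ℤ) + 1) = (n : ℤ) * (n + 1) := by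
  induction n with
  | zero => simp
  | succ k ih => rw [Finset.sum_range_succ, mul_add, ih]; push_cast; ring

lemma six_mul_sum_range_sq (n : ℕ) :
    6 * ∑ i ∈ Finset.range n, ((i : ℤ) + 1) ^ 2 = (n : ℤ) * (n + 1) * (2 * n + 1) := by
  induction n with
  | zero => simp
  | succ k ih => rw [Finset.sum_range_succ, mul_add, ih]; push_cast; ring

/-- The Dedekind sum `s(d, c) = ∑_{r=1}^{c-1} ((r/c)) ((dr/c))`. -/
noncomputable def dedekindSum (d c : ℤ) : ℚ :=
  ∑ r ∈ Finset.Ico (1 : ℤ) c,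
    (Int.fract ((r : ℚ) / (c : ℚ)) - 1 / 2) *
    (Int.fract ((d : ℚ) * (r : ℚ) / (c : ℚ)) - 1 / 2)

theorem six_c_dedekind_sum_int (c : ℤ) (hc : 0 < c) (d : ℤ) (hdc : Int.gcd d c = 1) :
    ∃ n : ℤ, (6 * (c : ℚ)) * dedekindSum d c = (n : ℚ) := by
  have hcz : (c : ℚ) ≠ 0 := by exact_mod_cast hc.ne'
  set S : ℤ := ∑ r ∈ Finset.Ico (1 : ℤ) c, r * (d * r % c) with hS
  set T : ℤ := ∑ r ∈ Finset.Ico (1 : ℤ) c, (d * r % c) with hT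
  set R : ℤ := ∑ r ∈ Finset.Ico (1 : ℤ) c, r with hR
  set Q : ℤ := ∑ r ∈ Finset.Ico (1 : ℤ) c, r ^ 2 with hQ
  set M : ℤ := ∑ r ∈ Finset.Ico (1 : ℤ) c,
      (12 * r * (d * r % c) - 6 * c * r - 6 * c * (d * r % c) + 3 * c ^ 2) with hM
  -- Step 1: the rational identity
  have key : (2 * (c : ℚ)) * ((6 * c) * dedekindSum d c) = (M : ℚ) := by
    rw [dedekindSum, Finset.mul_sum, Finset.mul_sum, hM, Int.cast_sum]
    refine Finset.sum_congr rfl fun r hr => ?_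
    obtain ⟨hr1, hr2⟩ := Finset.mem_Ico.mp hr
    have hm0 : 0 ≤ d * r % c := Int.emod_nonneg _ hc.ne'
    have hmc : d * r % c < c := Int.emod_lt_of_pos _ hc
    have hf1 : Int.fract ((r : ℚ) / c) = (r : ℚ) / c := by
      rw [Int.fract_eq_self]
      constructor
      · positivity
      · rw [div_lt_one (by exact_mod_cast hc)]; exact_mod_cast hr2
    have hf2 : Int.fract ((d : ℚ) * r / c) = ((d * r % c : ℤ) : ℚ) / c := by
      have hdr : (d : ℚ) * r / c = ((d * r / c : ℤ) : ℚ) + ((d * r % c : ℤ) : ℚ) / c := by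
        have hz : d * r = d * r / c * c + d * r % c := (Int.ediv_mul_add_emod (d * r) c).symm
        field_simp
        have hzq := congrArg (Int.cast : ℤ → ℚ) hz
        push_cast at hzq ⊢
        linarith
      rw [hdr, Int.fract_intCast_add, Int.fract_eq_self]
      constructor
      · positivity
      · rw [div_lt_one (by exact_mod_cast hc)]; exact_mod_cast hmc
    rw [hf1, hf2]
    push_cast
    field_simp
    ring
  -- Step 2: structure of M
  have hcard : ((Finset.Ico (1 : ℤ) c).card : ℤ) = c - 1 := by
    rw [Int.card_Ico]; omega
  have hMval : M = 12 * S - 6 * c * R - 6 * c * T + 3 * c ^ 2 * (c - 1) := by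
    have hconst : (3 * c ^ 2 * (c - 1) : ℤ) = ∑ _r ∈ Finset.Ico (1 : ℤ) c, 3 * c ^ 2 := by
      rw [Finset.sum_const, nsmul_eq_mul, hcard]; ring
    rw [hM, hS, hR, hT, hconst, Finset.mul_sum, Finset.mul_sum, Finset.mul_sum,
      ← Finset.sum_sub_distrib, ← Finset.sum_sub_distrib, ← Finset.sum_add_distrib]
    exact Finset.sum_congr rfl fun r _ => by ring
  have hn : ((c - 1).toNat : ℤ) = c - 1 := by omega
  have hRval : 2 * R = c * (c - 1) := by
    rw [hR, sum_Ico_one_int, two_mul_sum_range, hn]; ring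
  have hQval : 6 * Q = (c - 1) * c * (2 * c - 1) := by
    rw [hQ, sum_Ico_one_int, six_mul_sum_range_sq, hn]; ring
  -- Step 3: divisibility
  have hdvd1 : c ∣ 6 * S - 6 * d * Q := by
    have : 6 * S - 6 * d * Q = ∑ r ∈ Finset.Ico (1 : ℤ) c, (6 * r * (d * r % c) - 6 * d * r ^ 2) := by
      rw [hS, hQ, Finset.mul_sum, Finset.mul_sum, ← Finset.sum_sub_distrib]
      exact Finset.sum_congr rfl fun r _ => by ring
    rw [this]
    refine Finset.dvd_sum fun r _ => ⟨-(6 * r * (d * r / c)), ?_⟩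
    have := Int.emod_def (d * r) c
    linear_combination 6 * r * this
  have hdvd2 : c ∣ 6 * d * Q := ⟨d * ((c - 1) * (2 * c - 1)), by linear_combination d * hQval⟩
  have hdvdS : c ∣ 6 * S := by
    have := dvd_add hdvd1 hdvd2
    simpa using this
  obtain ⟨k, hk⟩ := hdvdS
  have hMfin : M = 2 * c * (k - 3 * T) := by
    rw [hMval]
    linear_combination 2 * hk - 3 * c * hRval
  refine ⟨k - 3 * T, ?_⟩
  have h2c : (2 * (c : ℚ)) ≠ 0 := by positivity
  apply mul_left_cancel₀ h2c
  rw [key, hMfin]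
  push_cast
  ring
end

section
/- Let ℓ ≥ 5 be prime, let Q be a positive integer with gcd(Q, 6ℓ) = 1, and let t be an integer with ℓ ∤ (24t − 1) and (24t−1 | ℓ) = (−1 | ℓ). Then there exists an integer a with gcd(a, 6Qℓ) = 1 and an integer t' such that a²(24t − 1) ≡ 24t' − 1 (mod Qℓ) and 24t' ≡ 1 − Q² (mod 24ℓ). -/
theorem exists_t_prime_f (ℓ : ℕ) [Fact ℓ.Prime] (hℓ : 5 ≤ ℓ)
    (Q : ℤ) (hQ : 0 < Q) (hQcop : Int.gcd Q (6 * ℓ) = 1)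
    (t : ℤ) (hnd : ¬ ((ℓ : ℤ) ∣ 24 * t - 1))
    (hleg : legendreSym ℓ (24 * t - 1) = legendreSym ℓ (-1)) :
    ∃ a t' : ℤ, Int.gcd a (6 * Q * ℓ) = 1 ∧
      a ^ 2 * (24 * t - 1) ≡ 24 * t' - 1 [ZMOD Q * ℓ] ∧
      24 * t' ≡ 1 - Q ^ 2 [ZMOD 24 * ℓ] := by
  have hp : ℓ.Prime := Fact.out
  have hpZ : Prime (ℓ : ℤ) := Nat.prime_iff_prime_int.mp hp
  set x : ℤ := 24 * t - 1 with hxdef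
  -- basic coprimality facts
  have hQ6ℓ : IsCoprime Q (6 * (ℓ:ℤ)) := Int.isCoprime_iff_gcd_eq_one.mpr hQcop
  have hQ6 : IsCoprime Q 6 := hQ6ℓ.of_mul_right_left
  have hQℓ : IsCoprime Q (ℓ:ℤ) := hQ6ℓ.of_mul_right_right
  have hl24 : ¬ (ℓ:ℤ) ∣ 24 := by
    intro h
    have h' : ℓ ∣ 24 := by exact_mod_cast h
    have hle : ℓ ≤ 24 := Nat.le_of_dvd (by norm_num) h'
    interval_cases ℓ <;> revert hp h' <;> decide
  have h24ℓ : IsCoprime (24:ℤ) (ℓ:ℤ) := (hpZ.coprime_iff_not_dvd.mpr hl24).symm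
  have h6ℓ : IsCoprime (6:ℤ) (ℓ:ℤ) := by
    have : ¬ (ℓ:ℤ) ∣ 6 := fun h => hl24 (h.trans ⟨4, by norm_num⟩)
    exact (hpZ.coprime_iff_not_dvd.mpr this).symm
  have hQ2 : ¬ (2:ℤ) ∣ Q := by
    intro h
    have := IsCoprime.isUnit_of_dvd' hQ6 h ⟨3, by norm_num⟩
    rw [Int.isUnit_iff] at this; omega
  have hQ3 : ¬ (3:ℤ) ∣ Q := by
    intro h
    have := IsCoprime.isUnit_of_dvd' hQ6 h ⟨2, by norm_num⟩
    rw [Int.isUnit_iff] at this; omega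
  have h24Q : IsCoprime (24:ℤ) Q := by
    have h2 : IsCoprime (2:ℤ) Q := ((Int.prime_two).coprime_iff_not_dvd.mpr hQ2)
    have h3 : IsCoprime (3:ℤ) Q := ((Int.prime_three).coprime_iff_not_dvd.mpr hQ3)
    have := (h2.mul_left (h2.mul_left (h2.mul_left h3)))
    have h24 : (2 * (2 * (2 * 3)) : ℤ) = 24 := by norm_num
    rwa [h24] at this
  -- 24 ∣ Q^2 - 1
  have h24dvd : (24:ℤ) ∣ Q^2 - 1 := by
    have hodd : Odd Q := Int.not_even_iff_odd.mp (fun he => hQ2 he.two_dvd)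
    obtain ⟨k, hk⟩ := hodd
    have heven : Even (k * (k + 1)) := Int.even_mul_succ_self k
    obtain ⟨m, hm⟩ := heven
    have h8 : (8:ℤ) ∣ Q^2 - 1 := ⟨m, by subst hk; linear_combination 4 * hm⟩
    have h3 : (3:ℤ) ∣ Q^2 - 1 := by
      have hQ0 : (Q : ZMod 3) ≠ 0 := by
        rw [Ne, ZMod.intCast_zmod_eq_zero_iff_dvd]; exact_mod_cast hQ3
      have key : ∀ q : ZMod 3, q ≠ 0 → q^2 - 1 = 0 := by decide
      have : ((Q^2 - 1 : ℤ) : ZMod 3) = 0 := by push_cast; exact key _ hQ0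
      exact_mod_cast (ZMod.intCast_zmod_eq_zero_iff_dvd _ 3).mp this
    have hco : IsCoprime (8:ℤ) 3 := by
      rw [Int.isCoprime_iff_gcd_eq_one]; decide
    have := hco.mul_dvd h8 h3
    norm_num at this
    exact this
  -- x is nonzero mod ℓ
  have hx0 : ((x : ℤ) : ZMod ℓ) ≠ 0 := by
    rw [Ne, ZMod.intCast_zmod_eq_zero_iff_dvd]; exact hnd
  have hne1 : ((-1 : ℤ) : ZMod ℓ) ≠ 0 := by
    haveI : Fact (1 < ℓ) := ⟨hp.one_lt⟩
    push_cast
    exact neg_ne_zero.mpr one_ne_zero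
  -- -x is a square mod ℓ
  have hsq : IsSquare ((-x : ℤ) : ZMod ℓ) := by
    have hnx0 : ((-x : ℤ) : ZMod ℓ) ≠ 0 := by
      push_cast
      push_cast at hx0
      exact neg_ne_zero.mpr hx0
    refine (legendreSym.eq_one_iff ℓ hnx0).mp ?_
    have : legendreSym ℓ (-x) = legendreSym ℓ (-1) * legendreSym ℓ x := by
      rw [← legendreSym.mul]; ring_nf
    rw [this, ← hleg, ← sq]
    exact legendreSym.sq_one ℓ hx0
  obtain ⟨b, hb⟩ := hsq
  -- β with x * β^2 = -1
  have hb' : b * b = -((x : ℤ) : ZMod ℓ) := by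
    rw [← hb]; push_cast; ring
  have hxinv : ((x : ℤ) : ZMod ℓ) * ((x : ℤ) : ZMod ℓ)⁻¹ = 1 := mul_inv_cancel₀ hx0
  set β : ZMod ℓ := b * ((x : ℤ) : ZMod ℓ)⁻¹ with hβdef
  have hβ : ((x : ℤ) : ZMod ℓ) * β^2 = -1 := by
    rw [hβdef]
    calc ((x : ℤ) : ZMod ℓ) * (b * ((x : ℤ) : ZMod ℓ)⁻¹)^2
        = (b*b) * ((x : ℤ) : ZMod ℓ)⁻¹ * (((x : ℤ) : ZMod ℓ) * ((x : ℤ) : ZMod ℓ)⁻¹) := by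
          ring
      _ = -((x : ℤ) : ZMod ℓ) * ((x : ℤ) : ZMod ℓ)⁻¹ * 1 := by rw [hb', hxinv]
      _ = -(((x : ℤ) : ZMod ℓ) * ((x : ℤ) : ZMod ℓ)⁻¹) := by ring
      _ = -1 := by rw [hxinv]
  have hβ0 : β ≠ 0 := by
    intro h
    rw [h] at hβ
    simp at hβ
  -- lift β to an integer α
  set α : ℤ := (ZMod.cast β : ℤ) with hαdef
  have hαβ : ((α : ℤ) : ZMod ℓ) = β := by
    rw [hαdef]; exact ZMod.intCast_zmod_cast β
  -- Bezout for 6Q and ℓ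
  have h6Qℓ : IsCoprime (6 * Q) (ℓ:ℤ) := h6ℓ.mul_left hQℓ
  obtain ⟨u, v, huv⟩ := h6Qℓ
  set a : ℤ := (ℓ:ℤ) * v + 6 * Q * u * (Q * α) with hadef
  -- a ≡ Q * β mod ℓ
  have haℓ : ((a : ℤ) : ZMod ℓ) = ((Q:ℤ) : ZMod ℓ) * β := by
    have hcast : ((u * (6 * Q) + v * (ℓ:ℤ) : ℤ) : ZMod ℓ) = 1 := by rw [huv]; norm_cast
    rw [hadef]
    push_cast [ZMod.natCast_self] at hcast ⊢
    rw [hαβ]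
    linear_combination (((Q:ℤ) : ZMod ℓ) * β) * hcast
  have hQ0' : ((Q:ℤ) : ZMod ℓ) ≠ 0 := by
    rw [Ne, ZMod.intCast_zmod_eq_zero_iff_dvd]
    intro h
    have := IsCoprime.isUnit_of_dvd' hQℓ h dvd_rfl
    rw [Int.isUnit_iff] at this
    have := hp.two_le; omega
  have ha0 : ((a : ℤ) : ZMod ℓ) ≠ 0 := by
    rw [haℓ]; exact mul_ne_zero hQ0' hβ0
  have hlnda : ¬ (ℓ:ℤ) ∣ a := fun h => ha0 ((ZMod.intCast_zmod_eq_zero_iff_dvd a ℓ).mpr h)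
  -- gcd(a, 6Qℓ) = 1
  have ha6Q : IsCoprime a (6 * Q) := by
    refine ⟨1, -(u * (Q * α) - u), ?_⟩
    rw [hadef]
    linear_combination huv
  have haℓcop : IsCoprime a (ℓ:ℤ) := (hpZ.coprime_iff_not_dvd.mpr hlnda).symm
  have hagcd : Int.gcd a (6 * Q * ℓ) = 1 :=
    Int.isCoprime_iff_gcd_eq_one.mp (ha6Q.mul_right haℓcop)
  -- Bezout for 24 and Qℓ
  have h24Qℓ : IsCoprime (24:ℤ) (Q * ℓ) := h24Q.mul_right h24ℓ
  obtain ⟨w, z, hwz⟩ := h24Qℓ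
  set t' : ℤ := w * (a^2 * x + 1) with ht'def
  refine ⟨a, t', hagcd, ?_, ?_⟩
  · -- a^2 * x ≡ 24t' - 1 mod Qℓ
    refine Int.modEq_iff_dvd.mpr ⟨-(z*(a^2*x+1)), ?_⟩
    rw [ht'def]
    linear_combination (a^2*x+1) * hwz
  · -- 24t' ≡ 1 - Q^2 mod 24ℓ
    refine (Int.modEq_iff_dvd.mpr ?_).symm
    have h24' : (24:ℤ) ∣ 24 * t' - (1 - Q^2) := by
      have heq : 24 * t' - (1 - Q^2) = 24 * t' + (Q^2 - 1) := by ring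
      rw [heq]
      exact dvd_add ⟨t', rfl⟩ h24dvd
    have hℓ' : (ℓ:ℤ) ∣ 24 * t' - (1 - Q^2) := by
      rw [← ZMod.intCast_zmod_eq_zero_iff_dvd, ht'def]
      have hwcast : ((w * 24 + z * (Q * (ℓ:ℤ)) : ℤ) : ZMod ℓ) = 1 := by rw [hwz]; norm_cast
      push_cast [ZMod.natCast_self] at hwcast ⊢
      linear_combination ((((a:ℤ) : ZMod ℓ))^2 * ((x:ℤ) : ZMod ℓ) + 1) * hwcast
        + ((x:ℤ) : ZMod ℓ) * ((((a:ℤ) : ZMod ℓ)) + ((Q:ℤ) : ZMod ℓ) * β) * haℓ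
        + (((Q:ℤ) : ZMod ℓ))^2 * hβ
    exact h24ℓ.mul_dvd h24' hℓ'
end

section
/- Let ℓ ≥ 5 be prime, let Q be a positive integer divisible by 4 with gcd(Q, 3ℓ) = 1, and let t be an integer with ℓ ∤ (3t + 2) and (3t+2 | ℓ) = (−1 | ℓ). Then there exist integers a, t' with gcd(a, 3Qℓ) = 1, a²(3t + 2) ≡ 3t' + 2 (mod Qℓ), and 48t' ≡ −(Q² + 32) (mod 48ℓ). -/
theorem exists_t_prime_omega (ℓ : ℕ) [Fact ℓ.Prime] (hℓ : 5 ≤ ℓ)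
    (Q : ℤ) (hQ : 0 < Q) (h4Q : 4 ∣ Q) (hQcop : Int.gcd Q (3 * ℓ) = 1)
    (t : ℤ) (hnd : ¬ ((ℓ : ℤ) ∣ 3 * t + 2))
    (hleg : legendreSym ℓ (3 * t + 2) = legendreSym ℓ (-1)) :
    ∃ a t' : ℤ, Int.gcd a (3 * Q * ℓ) = 1 ∧
      a ^ 2 * (3 * t + 2) ≡ 3 * t' + 2 [ZMOD Q * ℓ] ∧
      48 * t' ≡ -(Q ^ 2 + 32) [ZMOD 48 * ℓ] := by
  have hp : ℓ.Prime := Fact.out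
  haveI : NeZero ℓ := ⟨hp.pos.ne'⟩
  have h0 : ((3 * t + 2 : ℤ) : ZMod ℓ) ≠ 0 := by
    rw [Ne, ZMod.intCast_zmod_eq_zero_iff_dvd]; exact hnd
  have hℓdvd48 : ¬ (ℓ ∣ 48) := by
    intro h
    have h' : ℓ ∣ 16 * 3 := by norm_num at h ⊢; exact h
    rcases (Nat.Prime.dvd_mul hp).mp h' with h16 | h3
    · have h2 : ℓ ∣ 2 ^ 4 := by norm_num; exact h16
      have : ℓ ∣ 2 := hp.dvd_of_dvd_pow h2
      have := Nat.le_of_dvd (by norm_num) this; omega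
    · have := Nat.le_of_dvd (by norm_num) h3; omega
  have h400 : ((4 : ℤ) : ZMod ℓ) ≠ 0 := by
    rw [Ne, ZMod.intCast_zmod_eq_zero_iff_dvd]
    intro h
    have h48 : (ℓ : ℤ) ∣ ((48 : ℕ) : ℤ) := dvd_trans h (by norm_num)
    exact hℓdvd48 (by exact_mod_cast h48)
  have h4 : (4 : ZMod ℓ) ≠ 0 := by exact_mod_cast h400
  have hQℓ : ¬ ((ℓ : ℤ) ∣ Q) := by
    intro h
    have : (ℓ : ℤ) ∣ Int.gcd Q (3 * ℓ) := Int.dvd_coe_gcd h ⟨3, by ring⟩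
    rw [hQcop] at this
    have := Int.le_of_dvd (by norm_num) this; omega
  have hQ0 : ((Q : ℤ) : ZMod ℓ) ≠ 0 := by
    rw [Ne, ZMod.intCast_zmod_eq_zero_iff_dvd]; exact hQℓ
  have h30 : ((3 : ℤ) : ZMod ℓ) ≠ 0 := by
    rw [Ne, ZMod.intCast_zmod_eq_zero_iff_dvd]
    intro h
    have h48 : (ℓ : ℤ) ∣ ((48 : ℕ) : ℤ) := dvd_trans h (by norm_num)
    exact hℓdvd48 (by exact_mod_cast h48)
  have h3' : (3 : ZMod ℓ) ≠ 0 := by exact_mod_cast h30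
  -- get a square root β of -(3t+2) mod ℓ
  have hm1 : ((-1 : ℤ) : ZMod ℓ) ≠ 0 := by
    rw [Ne, ZMod.intCast_zmod_eq_zero_iff_dvd]
    intro h
    have := Int.le_of_dvd (by norm_num) (dvd_neg.mp h); omega
  have hn0 : ((-(3 * t + 2) : ℤ) : ZMod ℓ) ≠ 0 := by
    push_cast at h0 ⊢; exact neg_ne_zero.mpr h0
  have hsq : legendreSym ℓ (-(3 * t + 2)) = 1 := by
    have hmul := legendreSym.mul ℓ (-1) (3 * t + 2)
    have he : (-1 : ℤ) * (3 * t + 2) = -(3 * t + 2) := by ring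
    rw [he] at hmul
    rw [hmul, hleg]
    rcases legendreSym.eq_one_or_neg_one ℓ hm1 with h | h <;> rw [h] <;> norm_num
  obtain ⟨β, hβ⟩ := (legendreSym.eq_one_iff ℓ hn0).mp hsq
  set B : ZMod ℓ := ((3 * t + 2 : ℤ) : ZMod ℓ) with hBdef
  have hβ2 : β ^ 2 = -B := by
    rw [sq, ← hβ, hBdef]; push_cast; ring
  have hβ0 : β ≠ 0 := by
    intro h
    apply h0
    have hB0 : -B = 0 := by rw [← hβ2, h]; ring
    simpa using hB0
  set c : ZMod ℓ := (Q : ZMod ℓ) * β * 4⁻¹ * B⁻¹ with hcdef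
  have hc0 : c ≠ 0 :=
    mul_ne_zero (mul_ne_zero (mul_ne_zero hQ0 hβ0) (inv_ne_zero h4)) (inv_ne_zero h0)
  -- choose a ≡ c (mod ℓ), a ≡ 1 (mod 3Q)
  set d : ZMod ℓ := (c - 1) * ((3 : ZMod ℓ) * (Q : ZMod ℓ))⁻¹ with hddef
  set k : ℤ := (d.val : ℤ) with hkdef
  set a : ℤ := 1 + 3 * Q * k with hadef
  have hkd : ((k : ℤ) : ZMod ℓ) = d := by
    simp [hkdef, ZMod.natCast_val, ZMod.cast_id]
  have h3Q0 : (3 : ZMod ℓ) * (Q : ZMod ℓ) ≠ 0 := mul_ne_zero h3' hQ0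
  have hac : ((a : ℤ) : ZMod ℓ) = c := by
    rw [hadef]
    push_cast [hkd]
    rw [hddef]
    field_simp
    ring
  -- coprimality of a with 3Qℓ
  have hcop1 : IsCoprime a (3 * Q) := ⟨1, -k, by rw [hadef]; ring⟩
  have hℓZ : Prime (ℓ : ℤ) := Nat.prime_iff_prime_int.mp hp
  have hcop2 : IsCoprime a (ℓ : ℤ) := by
    rw [isCoprime_comm, hℓZ.coprime_iff_not_dvd]
    intro h
    have : ((a : ℤ) : ZMod ℓ) = 0 := (ZMod.intCast_zmod_eq_zero_iff_dvd a ℓ).mpr h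
    rw [hac] at this; exact hc0 this
  have hcopa : Int.gcd a (3 * Q * ℓ) = 1 :=
    Int.isCoprime_iff_gcd_eq_one.mp (IsCoprime.mul_right hcop1 hcop2)
  -- a ≡ 1 mod 3
  have ha3 : ((a : ℤ) : ZMod 3) = 1 := by
    rw [hadef]; push_cast
    rw [show ((3 : ZMod 3)) = 0 from by decide]
    ring
  have h3Qd : ¬ ((3 : ℤ) ∣ Q) := by
    intro h
    have : (3 : ℤ) ∣ Int.gcd Q (3 * ℓ) := Int.dvd_coe_gcd h ⟨(ℓ : ℤ), rfl⟩
    rw [hQcop] at this; norm_num at this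
  have hQ3 : ((Q : ℤ) : ZMod 3) ≠ 0 := by
    rw [Ne, ZMod.intCast_zmod_eq_zero_iff_dvd]
    intro h; exact h3Qd (by exact_mod_cast h)
  have hQ3sq : ((Q : ℤ) : ZMod 3) ^ 2 = 1 := by
    revert hQ3; generalize ((Q : ℤ) : ZMod 3) = x; revert x; decide
  -- define t'
  have h3dvd : (3 : ℤ) ∣ a ^ 2 * (3 * t + 2) - 2 := by
    have hz : ((a ^ 2 * (3 * t + 2) - 2 : ℤ) : ZMod 3) = 0 := by
      push_cast
      push_cast at ha3
      rw [ha3]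
      rw [show ((3 : ZMod 3)) = 0 from by decide]
      ring
    exact (ZMod.intCast_zmod_eq_zero_iff_dvd _ 3).mp hz
  set t' : ℤ := (a ^ 2 * (3 * t + 2) - 2) / 3 with ht'def
  have heq : 3 * t' + 2 = a ^ 2 * (3 * t + 2) := by
    rw [ht'def, Int.mul_ediv_cancel' h3dvd]; ring
  refine ⟨a, t', hcopa, by rw [heq], ?_⟩
  -- final congruence: reduce to divisibility of M by 48ℓ
  set M : ℤ := 16 * a ^ 2 * (3 * t + 2) + Q ^ 2 with hMdef
  have hM16 : (16 : ℤ) ∣ M := by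
    obtain ⟨q, hq⟩ := h4Q
    exact ⟨a ^ 2 * (3 * t + 2) + q ^ 2, by rw [hMdef, hq]; ring⟩
  have hM3 : (3 : ℤ) ∣ M := by
    have hz : ((M : ℤ) : ZMod 3) = 0 := by
      rw [hMdef]; push_cast
      push_cast at ha3 hQ3sq
      rw [ha3, hQ3sq]
      rw [show ((3 : ZMod 3)) = 0 from by decide]
      ring_nf
      decide
    exact (ZMod.intCast_zmod_eq_zero_iff_dvd _ 3).mp hz
  have hMℓ : ((ℓ : ℤ)) ∣ M := by
    have hz : ((M : ℤ) : ZMod ℓ) = 0 := by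
      rw [hMdef]
      have : ((16 * a ^ 2 * (3 * t + 2) + Q ^ 2 : ℤ) : ZMod ℓ)
          = 16 * ((a : ℤ) : ZMod ℓ) ^ 2 * B + ((Q : ℤ) : ZMod ℓ) ^ 2 := by
        rw [hBdef]; push_cast; ring
      rw [this, hac, hcdef]
      field_simp
      linear_combination (16 * ((Q : ℤ) : ZMod ℓ) ^ 2) * hβ2
    exact (ZMod.intCast_zmod_eq_zero_iff_dvd _ ℓ).mp hz
  have hM48 : (48 : ℤ) ∣ M := by
    have hc163 : IsCoprime (16 : ℤ) 3 := by
      rw [Int.isCoprime_iff_gcd_eq_one]; decide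
    have := hc163.mul_dvd hM16 hM3
    norm_num at this; exact this
  have hcop48ℓ : IsCoprime (48 : ℤ) ((ℓ : ℤ)) := by
    rw [Int.isCoprime_iff_gcd_eq_one]
    have hn : Nat.Coprime 48 ℓ := (Nat.Prime.coprime_iff_not_dvd hp).mpr hℓdvd48 |>.symm
    show Int.gcd ((48 : ℕ) : ℤ) ((ℓ : ℕ) : ℤ) = 1
    rw [Int.gcd_natCast_natCast]; exact hn
  have hdvd : (48 : ℤ) * ℓ ∣ M := hcop48ℓ.mul_dvd hM48 hMℓ
  rw [Int.modEq_iff_dvd]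
  have hfin : -(Q ^ 2 + 32) - 48 * t' = -M := by
    rw [hMdef]; linear_combination (-16 : ℤ) * heq
  rw [hfin]
  exact dvd_neg.mpr hdvd
end

section
/- Let ℓ ≥ 5 be prime, Q a positive integer with gcd(Q, ℓ) = 1, j ≥ 1, and t an integer with ℓ ∤ (24t − 1). Then for each integer r with 0 ≤ r < ℓ^{j−1}, there exists an integer a with gcd(a, 6Qℓ) = 1 such that a²(24t − 1) ≡ 24(t + Qℓr) − 1 (mod Qℓ^j). -/
/-- If `ℓ ∣ u - 1` then `ℓ^(i+1) ∣ u^(ℓ^i) - 1`. -/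
lemma radu_pow_aux (ℓ : ℕ) (hp : ℓ.Prime) (u : ℤ) (h : (ℓ : ℤ) ∣ u - 1) :
    ∀ i : ℕ, (ℓ : ℤ) ^ (i + 1) ∣ u ^ ℓ ^ i - 1 := by
  intro i
  induction i with
  | zero => simpa using h
  | succ i ih =>
    set v : ℤ := u ^ ℓ ^ i with hv
    have hgeom : v ^ ℓ - 1 = (∑ k ∈ Finset.range ℓ, v ^ k) * (v - 1) :=
      (geom_sum_mul v ℓ).symm
    have hv1 : (ℓ : ℤ) ∣ v - 1 := dvd_trans (dvd_pow_self _ (Nat.succ_ne_zero i)) ih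
    have hsum : (ℓ : ℤ) ∣ ∑ k ∈ Finset.range ℓ, v ^ k := by
      have hcast : ((v : ℤ) : ZMod ℓ) = 1 := by
        have := (ZMod.intCast_zmod_eq_zero_iff_dvd (v - 1) ℓ).mpr hv1
        push_cast at this
        exact sub_eq_zero.mp this
      rw [← ZMod.intCast_zmod_eq_zero_iff_dvd]
      push_cast
      simp [hcast, ZMod.natCast_self]
    have : u ^ ℓ ^ (i + 1) - 1 = v ^ ℓ - 1 := by
      rw [hv, ← pow_mul, pow_succ]
    rw [this, hgeom, pow_succ']
    exact mul_dvd_mul hsum ih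

lemma radu_not_dvd_six {ℓ : ℕ} (hp : ℓ.Prime) (h : 5 ≤ ℓ) (hd : ℓ ∣ 6) : False := by
  have := Nat.le_of_dvd (by norm_num) hd
  interval_cases ℓ
  · omega
  · exact absurd hp (by norm_num)

theorem radu_reduction_f (ℓ : ℕ) [Fact ℓ.Prime] (hℓ : 5 ≤ ℓ)
    (Q : ℤ) (hQ : 0 < Q) (hQcop : Int.gcd Q ℓ = 1) (j : ℕ) (hj : 1 ≤ j)
    (t : ℤ) (hnd : ¬ ((ℓ : ℤ) ∣ 24 * t - 1)) :
    ∀ r : ℤ, 0 ≤ r → r < (ℓ : ℤ) ^ (j - 1) →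
      ∃ a : ℤ, Int.gcd a (6 * Q * ℓ) = 1 ∧
        a ^ 2 * (24 * t - 1) ≡ 24 * (t + Q * ℓ * r) - 1 [ZMOD Q * (ℓ : ℤ) ^ j] := by
  intro r hr0 hr1
  have hp : ℓ.Prime := Fact.out
  have hpz : Prime (ℓ : ℤ) := Nat.prime_iff_prime_int.mp hp
  set M : ℤ := 24 * t - 1 with hM
  -- inverse of M mod ℓ^j
  have hMcop : IsCoprime ((ℓ : ℤ) ^ j) M :=
    ((hpz.coprime_iff_not_dvd).mpr hnd).pow_left
  obtain ⟨x, y, hxy⟩ := hMcop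
  -- u ≡ 1 mod ℓ, and s² ≡ u mod ℓ^j
  set u : ℤ := 1 + 24 * Q * ℓ * r * y with hu
  have hu1 : (ℓ : ℤ) ∣ u - 1 := ⟨24 * Q * r * y, by rw [hu]; ring⟩
  have hupow : ((ℓ : ℤ)) ^ j ∣ u ^ ℓ ^ (j - 1) - 1 := by
    have := radu_pow_aux ℓ hp u hu1 (j - 1)
    rwa [Nat.sub_add_cancel hj] at this
  have hodd : Odd (ℓ ^ (j - 1)) := (hp.odd_of_ne_two (by omega)).pow
  set k : ℕ := (ℓ ^ (j - 1) + 1) / 2 with hk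
  have h2k : 2 * k = ℓ ^ (j - 1) + 1 := by
    obtain ⟨m, hm⟩ := hodd
    omega
  set s : ℤ := u ^ k with hs
  have hs2 : ((ℓ : ℤ)) ^ j ∣ s ^ 2 - u := by
    have h1 : s ^ 2 = u ^ ℓ ^ (j - 1) * u := by
      rw [hs, ← pow_mul, mul_comm k 2, h2k, pow_succ]
    have h2 : s ^ 2 - u = (u ^ ℓ ^ (j - 1) - 1) * u := by rw [h1]; ring
    rw [h2]
    exact hupow.mul_right u
  -- CRT: a ≡ s mod ℓ^j, a ≡ 1 mod 6Q
  have hℓ6 : ¬ (ℓ : ℤ) ∣ 6 * Q := by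
    intro hdvd
    rcases hpz.dvd_mul.mp hdvd with h6 | hQ'
    · have h6' : ℓ ∣ 6 := by exact_mod_cast h6
      exact radu_not_dvd_six hp hℓ h6'
    · have : (ℓ : ℤ) ∣ Int.gcd Q ℓ := Int.dvd_coe_gcd hQ' dvd_rfl
      rw [hQcop] at this
      have := Int.le_of_dvd one_pos this
      omega
  have hcop6 : IsCoprime (6 * Q) ((ℓ : ℤ) ^ j) :=
    (((hpz.coprime_iff_not_dvd).mpr hℓ6).symm).pow_right
  obtain ⟨c, d, hcd⟩ := hcop6
  set a : ℤ := s * (c * (6 * Q)) + d * (ℓ : ℤ) ^ j with ha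
  have haℓ : ((ℓ : ℤ)) ^ j ∣ a - s := ⟨(1 - s) * d, by
    rw [ha]; linear_combination s * hcd⟩
  have haQ : (6 * Q) ∣ a - 1 := ⟨(s - 1) * c, by
    rw [ha]; linear_combination hcd⟩
  -- gcd condition
  have hs1 : (ℓ : ℤ) ∣ s - 1 := dvd_trans hu1 (by
    simpa using sub_dvd_pow_sub_pow u 1 k)
  have ha1ℓ : (ℓ : ℤ) ∣ a - 1 := by
    have h1 : (ℓ : ℤ) ∣ a - s := dvd_trans (dvd_pow_self _ (by omega)) haℓ
    have := dvd_add h1 hs1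
    rwa [sub_add_sub_cancel] at this
  have hacop : IsCoprime a (6 * Q * ℓ) := by
    obtain ⟨e, he⟩ := haQ
    obtain ⟨f, hf⟩ := ha1ℓ
    have c1 : IsCoprime a (6 * Q) := ⟨1, -e, by linarith [he]⟩
    have c2 : IsCoprime a (ℓ : ℤ) := ⟨1, -f, by linarith [hf]⟩
    exact c1.mul_right c2
  refine ⟨a, Int.isCoprime_iff_gcd_eq_one.mp hacop, ?_⟩
  -- the congruence
  have hgoal : 24 * (t + Q * ℓ * r) - 1 = M + 24 * Q * ℓ * r := by rw [hM]; ring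
  rw [hgoal]
  have hQℓcop : (Q.natAbs).Coprime (((ℓ : ℤ) ^ j).natAbs) := by
    have h1 : Nat.Coprime Q.natAbs ℓ := hQcop
    simpa [Int.natAbs_pow] using h1.pow_right j
  rw [← Int.modEq_and_modEq_iff_modEq_mul hQℓcop]
  constructor
  · -- mod Q
    have haQ' : Q ∣ a - 1 := dvd_trans ⟨6, by ring⟩ haQ
    have h1 : a ^ 2 * M ≡ 1 ^ 2 * M [ZMOD Q] := by
      have : a ≡ 1 [ZMOD Q] := (Int.modEq_iff_dvd.mpr haQ').symm
      exact (this.pow 2).mul_right M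
    have h2 : (1 : ℤ) ^ 2 * M ≡ M + 24 * Q * ℓ * r [ZMOD Q] := by
      rw [Int.modEq_iff_dvd]
      exact ⟨24 * ℓ * r, by ring⟩
    exact h1.trans h2
  · -- mod ℓ^j
    have h1 : a ^ 2 * M ≡ s ^ 2 * M [ZMOD (ℓ : ℤ) ^ j] := by
      have : a ≡ s [ZMOD (ℓ : ℤ) ^ j] :=
        (Int.modEq_iff_dvd.mpr haℓ).symm
      exact (this.pow 2).mul_right M
    have h2 : s ^ 2 * M ≡ u * M [ZMOD (ℓ : ℤ) ^ j] := by
      have : s ^ 2 ≡ u [ZMOD (ℓ : ℤ) ^ j] :=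
        (Int.modEq_iff_dvd.mpr hs2).symm
      exact this.mul_right M
    have h3 : u * M ≡ M + 24 * Q * ℓ * r [ZMOD (ℓ : ℤ) ^ j] := by
      rw [Int.modEq_iff_dvd]
      exact ⟨24 * Q * ℓ * r * x, by rw [hu, hM]; linear_combination (-24 * Q * ℓ * r) * hxy⟩
    exact (h1.trans h2).trans h3
end

section
/- Let ℓ ≥ 5 be prime, Q a positive integer with gcd(Q, 3ℓ) = 1, j ≥ 1, and t an integer with ℓ ∤ (3t + 2). Then for each integer r with 0 ≤ r < ℓ^{j−1}, there exists an integer a with gcd(a, 6Qℓ) = 1 such that a²(3t + 2) ≡ 3(t + Qℓr) + 2 (mod Qℓ^j). -/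
/-- If `u ≡ 1 (mod ℓ)` then `u ^ (ℓ ^ i) ≡ 1 (mod ℓ ^ (i+1))`. -/
lemma radu_pow_cong (ℓ : ℕ) (u : ℤ) (h1 : (ℓ : ℤ) ∣ u - 1) :
    ∀ i : ℕ, (ℓ : ℤ) ^ (i + 1) ∣ u ^ (ℓ ^ i) - 1 := by
  intro i
  induction i with
  | zero => simpa using h1
  | succ i ih =>
    set v := u ^ (ℓ ^ i) with hv
    have hv1 : (ℓ : ℤ) ∣ v - 1 := by
      have : (u - 1) ∣ v - 1 := by
        simpa using sub_dvd_pow_sub_pow u 1 (ℓ ^ i)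
      exact h1.trans this
    have hsum : (ℓ : ℤ) ∣ ∑ m ∈ Finset.range ℓ, v ^ m := by
      have hterm : (ℓ : ℤ) ∣ (∑ m ∈ Finset.range ℓ, v ^ m) - (ℓ : ℤ) := by
        have : (∑ m ∈ Finset.range ℓ, v ^ m) - (ℓ : ℤ)
            = ∑ m ∈ Finset.range ℓ, (v ^ m - 1) := by
          rw [Finset.sum_sub_distrib]
          simp
        rw [this]
        refine Finset.dvd_sum fun m _ => ?_
        have : (v - 1) ∣ v ^ m - 1 := by
          simpa using sub_dvd_pow_sub_pow v 1 m
        exact hv1.trans this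
      have := dvd_add hterm (dvd_refl (ℓ : ℤ))
      simpa using this
    have hgeom : v ^ ℓ - 1 = (∑ m ∈ Finset.range ℓ, v ^ m) * (v - 1) :=
      (geom_sum_mul v ℓ).symm
    have hdvd : (ℓ : ℤ) ^ (i + 2) ∣ v ^ ℓ - 1 := by
      rw [hgeom]
      have : (ℓ : ℤ) ^ (i + 2) = (ℓ : ℤ) * (ℓ : ℤ) ^ (i + 1) := by ring
      rw [this]
      exact mul_dvd_mul hsum ih
    have hvp : v ^ ℓ = u ^ (ℓ ^ (i + 1)) := by
      rw [hv, ← pow_mul, pow_succ]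
    rwa [hvp] at hdvd

/-- integers congruent to 1 are coprime. -/
lemma radu_cop_of_dvd (a d : ℤ) (h : d ∣ a - 1) : IsCoprime a d := by
  obtain ⟨k, hk⟩ := h
  exact ⟨1, -k, by linear_combination hk⟩

theorem radu_reduction_omega (ℓ : ℕ) [Fact ℓ.Prime] (hℓ : 5 ≤ ℓ)
    (Q : ℤ) (hQ : 0 < Q) (hQcop : Int.gcd Q (3 * ℓ) = 1) (j : ℕ) (hj : 1 ≤ j)
    (t : ℤ) (hnd : ¬ ((ℓ : ℤ) ∣ 3 * t + 2)) :
    ∀ r : ℤ, 0 ≤ r → r < (ℓ : ℤ) ^ (j - 1) →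
      ∃ a : ℤ, Int.gcd a (6 * Q * ℓ) = 1 ∧
        a ^ 2 * (3 * t + 2) ≡ 3 * (t + Q * ℓ * r) + 2 [ZMOD Q * (ℓ : ℤ) ^ j] := by
  intro r hr0 hr1
  have hp : ℓ.Prime := Fact.out
  have hpZ : Prime (ℓ : ℤ) := Int.prime_iff_natAbs_prime.mpr (by simpa using hp)
  set d : ℤ := 3 * t + 2 with hd
  -- basic coprimality facts
  have hQℓ : IsCoprime Q ((ℓ : ℤ)) := by
    have : IsCoprime Q (3 * (ℓ : ℤ)) := Int.isCoprime_iff_gcd_eq_one.mpr hQcop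
    exact this.of_mul_right_right
  have hℓ6 : ¬ ((ℓ : ℤ) ∣ 6) := by
    intro h
    have h6 : ℓ ∣ 6 := by exact_mod_cast h
    have := Nat.le_of_dvd (by norm_num) h6
    interval_cases ℓ
    · exact absurd h6 (by decide)
    · exact absurd hp (by decide)
  have h6ℓ : IsCoprime (6 : ℤ) ((ℓ : ℤ)) :=
    ((hpZ.coprime_iff_not_dvd).mpr hℓ6).symm
  have hℓd : IsCoprime ((ℓ : ℤ)) d := (hpZ.coprime_iff_not_dvd).mpr hnd
  have hℓjd : IsCoprime ((ℓ : ℤ) ^ j) d := hℓd.pow_left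
  -- inverse of d mod ℓ^j
  obtain ⟨z, c, hzc⟩ := hℓjd
  have hcd : (ℓ : ℤ) ^ j ∣ c * d - 1 := ⟨-z, by linear_combination hzc⟩
  have hℓdvdℓj : (ℓ : ℤ) ∣ (ℓ : ℤ) ^ j :=
    dvd_pow_self _ (by omega)
  -- the unit u ≡ 1 mod ℓ
  set u : ℤ := c * (d + 3 * Q * ℓ * r) with hu
  have hu1 : (ℓ : ℤ) ∣ u - 1 := by
    have h1 : (ℓ : ℤ) ∣ c * d - 1 := dvd_trans hℓdvdℓj hcd
    have h2 : (ℓ : ℤ) ∣ (ℓ : ℤ) * (3 * Q * r * c) := dvd_mul_right _ _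
    have : u - 1 = (c * d - 1) + (ℓ : ℤ) * (3 * Q * r * c) := by rw [hu]; ring
    rw [this]; exact dvd_add h1 h2
  -- u^(ℓ^(j-1)) ≡ 1 mod ℓ^j
  have hun : (ℓ : ℤ) ^ j ∣ u ^ (ℓ ^ (j - 1)) - 1 := by
    have := radu_pow_cong ℓ u hu1 (j - 1)
    rwa [Nat.sub_add_cancel hj] at this
  -- ℓ^(j-1) is odd, take the square root s = u^((ℓ^(j-1)+1)/2)
  have hodd : Odd (ℓ ^ (j - 1)) := by
    have : Odd ℓ := hp.odd_of_ne_two (by omega)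
    exact this.pow
  set m : ℕ := (ℓ ^ (j - 1) + 1) / 2 with hm
  have h2m : 2 * m = ℓ ^ (j - 1) + 1 := by
    obtain ⟨k, hk⟩ := hodd
    omega
  set s : ℤ := u ^ m with hs
  have hs2 : (ℓ : ℤ) ^ j ∣ s ^ 2 - u := by
    have h1 : s ^ 2 = u ^ (ℓ ^ (j - 1)) * u := by
      rw [hs, ← pow_mul, show m * 2 = ℓ ^ (j - 1) + 1 from by omega, pow_succ]
    have h2 : s ^ 2 - u = (u ^ (ℓ ^ (j - 1)) - 1) * u := by rw [h1]; ring
    rw [h2]; exact hun.mul_right u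
  have hsℓ : (ℓ : ℤ) ∣ s - 1 := by
    have : (u - 1) ∣ s - 1 := by
      simpa using sub_dvd_pow_sub_pow u 1 m
    exact hu1.trans this
  -- CRT: a ≡ 1 mod 6Q, a ≡ s mod ℓ^j
  have h6Qℓj : IsCoprime (6 * Q) ((ℓ : ℤ) ^ j) :=
    (h6ℓ.mul_left hQℓ).pow_right
  obtain ⟨x, y, hxy⟩ := h6Qℓj
  set a : ℤ := s * (x * (6 * Q)) + y * ((ℓ : ℤ) ^ j) with ha
  have ha1 : (6 * Q) ∣ a - 1 := ⟨x * (s - 1), by linear_combination hxy⟩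
  have haQ : Q ∣ a - 1 := (dvd_mul_left Q 6).trans ha1
  have has : (ℓ : ℤ) ^ j ∣ a - s := ⟨y * (1 - s), by linear_combination s * hxy⟩
  have haℓ1 : (ℓ : ℤ) ∣ a - 1 := by
    have h1 : (ℓ : ℤ) ∣ a - s := hℓdvdℓj.trans has
    have : a - 1 = (a - s) + (s - 1) := by ring
    rw [this]; exact dvd_add h1 hsℓ
  refine ⟨a, ?_, ?_⟩
  · -- coprimality with 6Qℓ
    have hc1 : IsCoprime a (6 * Q) := radu_cop_of_dvd a (6 * Q) ha1
    have hc2 : IsCoprime a ((ℓ : ℤ)) := radu_cop_of_dvd a (ℓ : ℤ) haℓ1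
    have : IsCoprime a (6 * Q * (ℓ : ℤ)) := hc1.mul_right hc2
    exact Int.isCoprime_iff_gcd_eq_one.mp this
  · rw [Int.modEq_iff_dvd]
    have hQdvd : Q ∣ (3 * (t + Q * ℓ * r) + 2) - a ^ 2 * d := by
      obtain ⟨k, hk⟩ := haQ
      exact ⟨3 * ℓ * r - k * (a + 1) * d, by linear_combination (-(a + 1) * d) * hk - hd⟩
    have hℓdvd : (ℓ : ℤ) ^ j ∣ (3 * (t + Q * ℓ * r) + 2) - a ^ 2 * d := by
      have hexp : (3 * (t + Q * ℓ * r) + 2) - a ^ 2 * d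
          = -((a - s) * ((a + s) * d)) - (s ^ 2 - u) * d
            - (c * d - 1) * (d + 3 * Q * ℓ * r) := by
        rw [hu, hd]; ring
      rw [hexp]
      exact dvd_sub (dvd_sub (dvd_neg.mpr (has.mul_right _)) (hs2.mul_right d))
        (hcd.mul_right _)
    exact (hQℓ.pow_right).mul_dvd hQdvd hℓdvd
end
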